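/- arXiv:2409.05481 — 4 statements merged into one kernel-verified Lean document; each statement's English description precedes it below -/
import Mathlib

section
/- Let Δ be a simplicial complex and σ a face of Δ such that σ is not an intersection of facets of Δ. Then the link of σ in Δ is a cone, i.e., there exists a vertex v not in σ such that every face of link_Δ(σ) together with v is again a face of link_Δ(σ). In particular link_Δ(σ) is acyclic. -/
open Finset

namespace SRPure

variable {V : Type*}

/-- A downward closed set of finite sets: the faces of an abstract simplicial complex. -/
def IsDown (Δ : Set (Finset V)) : Prop := ∀ s ∈ Δ, ∀ t ⊆ s, t ∈ Δ

/-- A facet is a maximal face. -/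
def IsFacet (Δ : Set (Finset V)) (F : Finset V) : Prop :=
  F ∈ Δ ∧ ∀ G ∈ Δ, F ⊆ G → F = G

section Link

variable [DecidableEq V]

/-- The link of a face `σ`. -/
def link (Δ : Set (Finset V)) (σ : Finset V) : Set (Finset V) :=
  {τ | Disjoint τ σ ∧ τ ∪ σ ∈ Δ}

theorem link_down {Δ : Set (Finset V)} (hΔ : IsDown Δ) (σ : Finset V) :
    IsDown (link Δ σ) := by
  rintro s ⟨hd, hu⟩ t hts
  exact ⟨hd.mono_left hts, hΔ _ hu _ (Finset.union_subset_union hts (Finset.Subset.refl σ))⟩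

end Link

section Homology

variable (K : Type*) [Field K] [LinearOrder V]

/-- Simplicial chains spanned by the faces of cardinality `c`. -/
abbrev Chains (Δ : Set (Finset V)) (c : ℕ) : Type _ :=
  {s : Finset V // s ∈ Δ ∧ s.card = c} →₀ K

/-- The boundary of a single face of cardinality `c+1`. -/
noncomputable def faceBdry {Δ : Set (Finset V)} (hΔ : IsDown Δ) (c : ℕ)
    (s : {s : Finset V // s ∈ Δ ∧ s.card = c + 1}) : Chains K Δ c :=
  ∑ v ∈ s.1.attach,
    ((-1 : K) ^ ((s.1.filter (fun w => w < v.1)).card)) •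
      Finsupp.single
        ⟨s.1.erase v.1, hΔ _ s.2.1 _ (Finset.erase_subset _ _),
          by simp [Finset.card_erase_of_mem v.2, s.2.2]⟩ (1 : K)

/-- The simplicial boundary map. -/
noncomputable def bdry {Δ : Set (Finset V)} (hΔ : IsDown Δ) (c : ℕ) :
    Chains K Δ (c + 1) →ₗ[K] Chains K Δ c :=
  Finsupp.lsum K fun s => LinearMap.toSpanSingleton K _ (faceBdry K hΔ c s)

/-- Reduced cycles in cardinality `c` (homological degree `c - 1`). -/
noncomputable def cycles {Δ : Set (Finset V)} (hΔ : IsDown Δ) :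
    (c : ℕ) → Submodule K (Chains K Δ c)
  | 0 => ⊤
  | c + 1 => LinearMap.ker (bdry K hΔ c)

/-- `RH K hΔ c` is the reduced simplicial homology (with coefficients in `K`) of the
complex in homological degree `c - 1`, indexed by the cardinality `c` of faces; so
`RH K hΔ 0` is `H̃₋₁` and `RH K hΔ (i+1)` is `H̃ᵢ`. -/
noncomputable abbrev RH {Δ : Set (Finset V)} (hΔ : IsDown Δ) (c : ℕ) :=
  @HasQuotient.Quotient (cycles K hΔ c) (Submodule K (cycles K hΔ c))
    (Submodule.hasQuotient (R := K) (M := cycles K hΔ c))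
    (Submodule.comap (cycles K hΔ c).subtype (LinearMap.range (bdry K hΔ c)))

/-- A complex is PR (has a "pure resolution") over `K` if links of faces of different
sizes never have nontrivial reduced homology in the same degree. -/
def IsPR {Δ : Set (Finset V)} (hΔ : IsDown Δ) : Prop :=
  ∀ σ ∈ Δ, ∀ τ ∈ Δ, ∀ c : ℕ,
    Nontrivial (RH K (link_down hΔ σ) c) →
    Nontrivial (RH K (link_down hΔ τ) c) → σ.card = τ.card

end Homology

section Cone

variable (K : Type*) [Field K] [LinearOrder V]
variable {Γ : Set (Finset V)} (hΓ : IsDown Γ) {v : V}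

/-- sign -/
def sgn (s : Finset V) (u : V) : K := (-1 : K) ^ ((s.filter (fun w => w < u)).card)

variable (hcone : ∀ τ ∈ Γ, insert v τ ∈ Γ)

noncomputable def coneF (c : ℕ) (s : {s : Finset V // s ∈ Γ ∧ s.card = c}) :
    Chains K Γ (c + 1) :=
  if hvs : v ∈ s.1 then 0 else
    sgn K s.1 v •
      Finsupp.single
        ⟨insert v s.1, hcone _ s.2.1, by
          rw [Finset.card_insert_of_notMem hvs, s.2.2]⟩ (1 : K)

noncomputable def coneMap (c : ℕ) : Chains K Γ c →ₗ[K] Chains K Γ (c + 1) :=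
  Finsupp.lsum K fun s => LinearMap.toSpanSingleton K _ (coneF K hcone c s)

lemma coneMap_single (c : ℕ) (s : {s : Finset V // s ∈ Γ ∧ s.card = c}) :
    coneMap K hcone c (Finsupp.single s 1) = coneF K hcone c s := by
  simp [coneMap]

lemma bdry_single (c : ℕ) (s : {s : Finset V // s ∈ Γ ∧ s.card = c + 1}) :
    bdry K hΓ c (Finsupp.single s 1) = faceBdry K hΓ c s := by
  simp [bdry]

lemma sgn_insert_self {s : Finset V} : sgn K (insert v s) v = sgn K s v := by
  unfold sgn
  rw [Finset.filter_insert, if_neg (lt_irrefl v)]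

lemma sgn_erase_self {s : Finset V} : sgn K (s.erase v) v = sgn K s v := by
  unfold sgn
  rw [Finset.filter_erase, Finset.erase_eq_of_notMem (by simp)]

lemma sgn_mul_self (s : Finset V) (u : V) : sgn K s u * sgn K s u = 1 := by
  unfold sgn
  rw [← pow_add]
  exact Even.neg_one_pow ⟨_, rfl⟩

lemma sgn_key {s : Finset V} {u : V} (hu : u ∈ s) (hv : v ∉ s) :
    sgn K s v * sgn K (insert v s) u = -(sgn K s u * sgn K (s.erase u) v) := by
  have huv : u ≠ v := fun h => hv (h ▸ hu)
  unfold sgn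
  rcases lt_or_gt_of_ne huv with h | h
  · -- u < v
    have h1 : Finset.filter (fun w => w < u) (insert v s) = Finset.filter (fun w => w < u) s := by
      rw [Finset.filter_insert, if_neg (by exact fun hvu => absurd (hvu.trans h) (lt_irrefl v))]
    have h2 : u ∈ Finset.filter (fun w => w < v) s := Finset.mem_filter.2 ⟨hu, h⟩
    have h3 : Finset.filter (fun w => w < v) (s.erase u) =
        (Finset.filter (fun w => w < v) s).erase u := Finset.filter_erase _ _ _
    have h4 : ((Finset.filter (fun w => w < v) s).erase u).card + 1 =
        (Finset.filter (fun w => w < v) s).card := Finset.card_erase_add_one h2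
    rw [h1, h3, ← h4, pow_succ]
    ring
  · -- v < u
    have h1 : Finset.filter (fun w => w < u) (insert v s) =
        insert v (Finset.filter (fun w => w < u) s) := by
      rw [Finset.filter_insert, if_pos h]
    have h2 : v ∉ Finset.filter (fun w => w < u) s := fun hh => hv (Finset.mem_filter.1 hh).1
    have h3 : Finset.filter (fun w => w < v) (s.erase u) = Finset.filter (fun w => w < v) s := by
      rw [Finset.filter_erase, Finset.erase_eq_of_notMem
        (fun hh => absurd ((Finset.mem_filter.1 hh).2.trans h) (lt_irrefl u))]
    rw [h1, Finset.card_insert_of_notMem h2, h3, pow_succ]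
    ring

include hΓ in
lemma cone_gen (c : ℕ) (s : {s : Finset V // s ∈ Γ ∧ s.card = c + 1}) :
    bdry K hΓ (c + 1) (coneMap K hcone (c + 1) (Finsupp.single s 1)) +
      coneMap K hcone c (bdry K hΓ c (Finsupp.single s 1)) = Finsupp.single s 1 := by
  obtain ⟨s, hs, hc⟩ := s
  rw [coneMap_single, bdry_single]
  by_cases hvs : v ∈ s
  · rw [coneF, dif_pos hvs, map_zero, zero_add, faceBdry, map_sum]
    rw [Finset.sum_eq_single (⟨v, hvs⟩ : {x // x ∈ s})]
    · simp only [map_smul, coneMap_single, coneF]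
      rw [dif_neg (Finset.notMem_erase v s), smul_smul]
      show (sgn K s v * sgn K (s.erase v) v) • _ = _
      rw [sgn_erase_self, sgn_mul_self, one_smul]
      exact congrArg (fun t => Finsupp.single t (1 : K)) (Subtype.ext (Finset.insert_erase hvs))
    · intro u _ hune
      have hmem : v ∈ s.erase u.1 :=
        Finset.mem_erase.2 ⟨fun h => hune (Subtype.ext h.symm), hvs⟩
      simp only [map_smul, coneMap_single, coneF]
      rw [dif_pos hmem, smul_zero]
    · intro h; exact absurd (Finset.mem_attach _ _) h
  · -- v ∉ s
    have hnotmem : (⟨v, Finset.mem_insert_self v s⟩ : {x // x ∈ insert v s}) ∉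
        s.attach.image (fun x => (⟨x.1, Finset.mem_insert_of_mem x.2⟩ : {x // x ∈ insert v s})) := by
      intro h
      obtain ⟨x, -, hx⟩ := Finset.mem_image.1 h
      exact hvs (by rw [← show x.1 = v from congrArg Subtype.val hx]; exact x.2)
    have h1 : bdry K hΓ (c + 1) (coneF K hcone (c + 1) ⟨s, hs, hc⟩) =
        Finsupp.single ⟨s, hs, hc⟩ 1 +
          ∑ x ∈ s.attach, (sgn K s v * sgn K (insert v s) x.1) •
            Finsupp.single (⟨insert v (s.erase x.1),
              hcone _ (hΓ _ hs _ (Finset.erase_subset _ _)), by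
                rw [Finset.card_insert_of_notMem
                  (fun h => hvs (Finset.mem_of_mem_erase h)),
                  Finset.card_erase_of_mem x.2, hc]; omega⟩ :
              {t : Finset V // t ∈ Γ ∧ t.card = c + 1}) (1 : K) := by
      rw [coneF, dif_neg hvs, map_smul, bdry_single, faceBdry]
      simp only
      rw [Finset.attach_insert, Finset.sum_insert hnotmem,
        Finset.sum_image (fun _ _ _ _ => Subtype.eq ∘ Subtype.mk.inj),
        smul_add, Finset.smul_sum]
      congr 1
      · rw [smul_smul]
        show (sgn K s v * sgn K (insert v s) v) • _ = _
        rw [sgn_insert_self, sgn_mul_self, one_smul]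
        exact congrArg (fun t => Finsupp.single t (1 : K))
          (Subtype.ext (Finset.erase_insert hvs))
      · refine Finset.sum_congr rfl fun x _ => ?_
        rw [smul_smul]
        have hne : v ≠ x.1 := fun h => hvs (h ▸ x.2)
        exact congrArg (fun m => (sgn K s v * sgn K (insert v s) x.1) • m)
          (congrArg (fun t => Finsupp.single t (1 : K))
            (Subtype.ext (Finset.erase_insert_of_ne hne)))
    have h2 : coneMap K hcone c (faceBdry K hΓ c ⟨s, hs, hc⟩) =
        ∑ x ∈ s.attach, (sgn K s x.1 * sgn K (s.erase x.1) v) •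
          Finsupp.single (⟨insert v (s.erase x.1),
            hcone _ (hΓ _ hs _ (Finset.erase_subset _ _)), by
              rw [Finset.card_insert_of_notMem
                (fun h => hvs (Finset.mem_of_mem_erase h)),
                Finset.card_erase_of_mem x.2, hc]; omega⟩ :
            {t : Finset V // t ∈ Γ ∧ t.card = c + 1}) (1 : K) := by
      rw [faceBdry, map_sum]
      refine Finset.sum_congr rfl fun x _ => ?_
      rw [map_smul, coneMap_single, coneF,
        dif_neg (fun h => hvs (Finset.mem_of_mem_erase h)), smul_smul]
      rfl
    rw [h1, h2, add_assoc, ← Finset.sum_add_distrib,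
      Finset.sum_eq_zero (fun x _ => by
        rw [sgn_key K x.2 hvs, neg_smul, neg_add_cancel]), add_zero]

include hΓ in
lemma cone_identity (c : ℕ) (z : Chains K Γ (c + 1)) :
    bdry K hΓ (c + 1) (coneMap K hcone (c + 1) z) +
      coneMap K hcone c (bdry K hΓ c z) = z := by
  induction z using Finsupp.induction_linear with
  | zero => simp
  | add f g hf hg =>
    rw [map_add, map_add, map_add, map_add, add_add_add_comm, hf, hg]
  | single s k =>
    rw [show (Finsupp.single s k) = k • Finsupp.single s (1 : K) by
        rw [Finsupp.smul_single', mul_one],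
      map_smul, map_smul, map_smul, map_smul, ← smul_add,
      cone_gen K hΓ hcone c s]

include hΓ in
lemma cone_base (z : Chains K Γ 0) :
    bdry K hΓ 0 (coneMap K hcone 0 z) = z := by
  induction z using Finsupp.induction_linear with
  | zero => simp
  | add f g hf hg => rw [map_add, map_add, hf, hg]
  | single s k =>
    rw [show (Finsupp.single s k) = k • Finsupp.single s (1 : K) by
        rw [Finsupp.smul_single', mul_one], map_smul, map_smul]
    congr 1
    obtain ⟨s, hs, hc⟩ := s
    obtain rfl := Finset.card_eq_zero.mp hc
    rw [coneMap_single, coneF, dif_neg (Finset.notMem_empty v)]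
    rw [map_smul, bdry_single, faceBdry]
    simp only
    rw [Finset.attach_insert]
    rw [Finset.sum_insert (fun h => by obtain ⟨x, -, -⟩ := Finset.mem_image.1 h; exact absurd x.2 (Finset.notMem_empty _)), Finset.attach_empty, Finset.image_empty,
      Finset.sum_empty, add_zero, smul_smul]
    show (sgn K ∅ v * sgn K (insert v ∅) v) • _ = _
    rw [sgn_insert_self, sgn_mul_self, one_smul]
    exact congrArg (fun t => Finsupp.single t (1 : K))
      (Subtype.ext (Finset.erase_insert (Finset.notMem_empty v)))

include hΓ hcone in
theorem cone_subsingleton (c : ℕ) : Subsingleton (RH K hΓ c) := by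
  have : Submodule.comap (cycles K hΓ c).subtype (LinearMap.range (bdry K hΓ c)) = ⊤ := by
    rw [Submodule.eq_top_iff']
    intro x
    rw [Submodule.mem_comap, LinearMap.mem_range]
    cases c with
    | zero => exact ⟨coneMap K hcone 0 x.1, cone_base K hΓ hcone x.1⟩
    | succ c =>
      refine ⟨coneMap K hcone (c + 1) x.1, ?_⟩
      have hx : bdry K hΓ c x.1 = 0 := x.2
      have := cone_identity K hΓ hcone c x.1
      rwa [hx, map_zero, add_zero] at this
  exact Submodule.Quotient.subsingleton_iff.mpr this

end Cone


end SRPure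


open SRPure in
/-- If a face `σ` of a simplicial complex `Δ` is not an intersection of
facets of `Δ`, then `link_Δ σ` is a cone: there is a vertex `v ∉ σ` of the link such that
every face of the link together with `v` is again a face of the link.  In particular the
link is acyclic (all reduced homology, indexed here by cardinality, vanishes). -/
theorem link_isCone_of_not_inter_facets
    {V : Type*} [LinearOrder V] [Fintype V] (K : Type*) [Field K]
    (Δ : Set (Finset V)) (hΔ : IsDown Δ) (σ : Finset V) (hσ : σ ∈ Δ)
    (hnot : ¬ ∃ 𝒮 : Finset (Finset V), 𝒮.Nonempty ∧ (∀ F ∈ 𝒮, IsFacet Δ F) ∧ ∀ w : V, w ∈ σ ↔ ∀ F ∈ 𝒮, w ∈ F) :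
    (∃ v : V, v ∉ σ ∧ {v} ∈ link Δ σ ∧ ∀ τ ∈ link Δ σ, insert v τ ∈ link Δ σ) ∧
    ∀ c : ℕ, Subsingleton (RH K (link_down hΔ σ) c) := by
  classical
  have hfacet : ∀ s ∈ Δ, ∃ F, IsFacet Δ F ∧ s ⊆ F := by
    intro s hs
    obtain ⟨F, hF, hmax⟩ := Set.Finite.exists_maximalFor Finset.card
      {G | G ∈ Δ ∧ s ⊆ G} (Set.toFinite _) ⟨s, hs, Finset.Subset.refl s⟩
    refine ⟨F, ⟨hF.1, fun G hG hFG => ?_⟩, hF.2⟩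
    exact Finset.eq_of_subset_of_card_le hFG
      (hmax ⟨hG, hF.2.trans hFG⟩ (Finset.card_le_card hFG))
  set 𝒮 : Finset (Finset V) := Finset.univ.filter (fun F => IsFacet Δ F ∧ σ ⊆ F) with h𝒮
  have hmem : ∀ F ∈ 𝒮, IsFacet Δ F ∧ σ ⊆ F := fun F hF => by
    simpa [h𝒮] using hF
  obtain ⟨F₀, hF₀, hσF₀⟩ := hfacet σ hσ
  have h𝒮ne : 𝒮.Nonempty := ⟨F₀, by simp [h𝒮, hF₀, hσF₀]⟩
  have hne : ¬ ∀ w : V, w ∈ σ ↔ ∀ F ∈ 𝒮, w ∈ F := fun h =>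
    hnot ⟨𝒮, h𝒮ne, fun F hF => (hmem F hF).1, h⟩
  push_neg at hne
  obtain ⟨w, hw⟩ := hne
  obtain ⟨hwσ, F, hF𝒮, hwF⟩ | ⟨hwσ, hwP⟩ := hw
  · exact absurd ((hmem F hF𝒮).2 hwσ) hwF
  have hkey : ∀ τ ∈ link Δ σ, insert w τ ∈ link Δ σ := by
    rintro τ ⟨hd, hu⟩
    obtain ⟨F, hF, hsub⟩ := hfacet (τ ∪ σ) hu
    have hσF : σ ⊆ F := Finset.subset_union_right.trans hsub
    have hwF : w ∈ F := hwP F (by simp [h𝒮, hF, hσF])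
    refine ⟨Finset.disjoint_insert_left.2 ⟨hwσ, hd⟩, ?_⟩
    rw [Finset.insert_union]
    exact hΔ F hF.1 _ (Finset.insert_subset hwF hsub)
  have hempty : (∅ : Finset V) ∈ link Δ σ :=
    ⟨Finset.disjoint_empty_left σ, by rwa [Finset.empty_union]⟩
  have hsingle : ({w} : Finset V) ∈ link Δ σ := by
    simpa using hkey ∅ hempty
  exact ⟨⟨w, hwσ, hsingle, hkey⟩,
    fun c => cone_subsingleton K (link_down hΔ σ) hkey c⟩
end

section
/- Let Δ be a simplicial complex on [n] which is PR over a field K, and let σ be a face of Δ such that the reduced homology H̃_j(link_Δ σ; K) is nonzero for some j ≥ 0. Then there exists a face τ of Δ strictly containing σ such that H̃_{j−1}(link_Δ τ; K) ≠ 0. -/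
open Finset

open Finset SRPure

namespace SRAux

variable {V : Type*} [LinearOrder V] (K : Type*) [Field K]

/-- deletion of a vertex -/
def del (Γ : Set (Finset V)) (v : V) : Set (Finset V) := {f ∈ Γ | v ∉ f}

theorem del_down {Γ : Set (Finset V)} (hΓ : IsDown Γ) (v : V) : IsDown (del Γ v) :=
  fun s hs t hts => ⟨hΓ s hs.1 t hts, fun hv => hs.2 (hts hv)⟩

theorem del_subset (Γ : Set (Finset V)) (v : V) : del Γ v ⊆ Γ := fun _ h => h.1

theorem not_mem_of_link {Γ : Set (Finset V)} {v : V} {t : Finset V}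
    (ht : t ∈ link Γ {v}) : v ∉ t := Finset.disjoint_singleton_right.1 ht.1

theorem insert_mem_of_link {Γ : Set (Finset V)} {v : V} {t : Finset V}
    (ht : t ∈ link Γ {v}) : insert v t ∈ Γ := by
  rw [Finset.insert_eq, Finset.union_comm]
  exact ht.2

theorem link_subset_del {Γ : Set (Finset V)} (hΓ : IsDown Γ) (v : V) :
    link Γ {v} ⊆ del Γ v := by
  rintro t ht
  exact ⟨hΓ _ (insert_mem_of_link ht) _ (Finset.subset_insert _ _), not_mem_of_link ht⟩

/-- the face map of an inclusion of complexes -/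
def inclF {Γ₁ Γ₂ : Set (Finset V)} (h : Γ₁ ⊆ Γ₂) (c : ℕ) :
    {s : Finset V // s ∈ Γ₁ ∧ s.card = c} → {s : Finset V // s ∈ Γ₂ ∧ s.card = c} :=
  fun s => ⟨s.1, h s.2.1, s.2.2⟩

theorem inclF_inj {Γ₁ Γ₂ : Set (Finset V)} (h : Γ₁ ⊆ Γ₂) (c : ℕ) :
    Function.Injective (inclF h c) :=
  by
  intro a b hab
  have h2 := congrArg Subtype.val hab
  exact Subtype.ext h2

/-- inclusion of chains -/
noncomputable def incl {Γ₁ Γ₂ : Set (Finset V)} (h : Γ₁ ⊆ Γ₂) (c : ℕ) :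
    Chains K Γ₁ c →ₗ[K] Chains K Γ₂ c :=
  Finsupp.lmapDomain K K (inclF h c)

theorem incl_single {Γ₁ Γ₂ : Set (Finset V)} (h : Γ₁ ⊆ Γ₂) (c : ℕ)
    (a : {s : Finset V // s ∈ Γ₁ ∧ s.card = c}) (b : K) :
    incl K h c (Finsupp.single a b) = Finsupp.single (inclF h c a) b :=
  Finsupp.mapDomain_single

theorem incl_inj {Γ₁ Γ₂ : Set (Finset V)} (h : Γ₁ ⊆ Γ₂) (c : ℕ) :
    Function.Injective (incl K h c) :=
  Finsupp.mapDomain_injective (inclF_inj h c)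

theorem incl_incl {Γ₁ Γ₂ Γ₃ : Set (Finset V)} (h12 : Γ₁ ⊆ Γ₂) (h23 : Γ₂ ⊆ Γ₃) (c : ℕ)
    (x : Chains K Γ₁ c) :
    incl K h23 c (incl K h12 c x) = incl K (h12.trans h23) c x := by
  induction x using Finsupp.induction_linear with
  | zero => simp
  | add a b ha hb => simp [map_add, ha, hb]
  | single a b => simp [incl_single]; rfl

/-- the cone face map: `t ↦ insert v t` -/
def coneF (Γ : Set (Finset V)) (v : V) (c : ℕ) :
    {t : Finset V // t ∈ link Γ {v} ∧ t.card = c} → {s : Finset V // s ∈ Γ ∧ s.card = c + 1} :=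
  fun t => ⟨insert v t.1, insert_mem_of_link t.2.1,
    by rw [Finset.card_insert_of_notMem (not_mem_of_link t.2.1), t.2.2]⟩

theorem coneF_inj (Γ : Set (Finset V)) (v : V) (c : ℕ) :
    Function.Injective (coneF Γ v c) := by
  rintro ⟨a, ha⟩ ⟨b, hb⟩ h
  apply Subtype.ext
  have h' : insert v a = insert v b := congrArg Subtype.val h
  have h2 : (insert v a).erase v = (insert v b).erase v := by rw [h']
  rwa [Finset.erase_insert (not_mem_of_link ha.1),
    Finset.erase_insert (not_mem_of_link hb.1)] at h2

/-- coning a chain of the link with the vertex `v` (no signs) -/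
noncomputable def cone (Γ : Set (Finset V)) (v : V) (c : ℕ) :
    Chains K (link Γ {v}) c →ₗ[K] Chains K Γ (c + 1) :=
  Finsupp.lmapDomain K K (coneF Γ v c)

/-- contracting a chain with the vertex `v` (no signs) -/
noncomputable def contr (Γ : Set (Finset V)) (v : V) (c : ℕ) :
    Chains K Γ (c + 1) →ₗ[K] Chains K (link Γ {v}) c :=
  Finsupp.lcomapDomain (coneF Γ v c) (coneF_inj Γ v c)

theorem cone_single (Γ : Set (Finset V)) (v : V) (c : ℕ)
    (a : {t : Finset V // t ∈ link Γ {v} ∧ t.card = c}) (b : K) :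
    cone K Γ v c (Finsupp.single a b) = Finsupp.single (coneF Γ v c a) b :=
  Finsupp.mapDomain_single

theorem contr_single_mem (Γ : Set (Finset V)) (v : V) (c : ℕ)
    (a : {t : Finset V // t ∈ link Γ {v} ∧ t.card = c}) (b : K) :
    contr K Γ v c (Finsupp.single (coneF Γ v c a) b) = Finsupp.single a b :=
  Finsupp.comapDomain_single _ _ _ ((coneF_inj Γ v c).injOn)

theorem contr_single_not_mem (Γ : Set (Finset V)) (v : V) (c : ℕ)
    (u : {s : Finset V // s ∈ Γ ∧ s.card = c + 1}) (hu : v ∉ u.1) (b : K) :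
    contr K Γ v c (Finsupp.single u b) = 0 := by
  ext t
  show (Finsupp.single u b) (coneF Γ v c t) = 0
  have hne : ¬ u = coneF Γ v c t :=
    fun h => hu (by rw [h]; exact Finset.mem_insert_self v t.1)
  rw [Finsupp.single_apply, if_neg hne]

theorem contr_cone (Γ : Set (Finset V)) (v : V) (c : ℕ) (x : Chains K (link Γ {v}) c) :
    contr K Γ v c (cone K Γ v c x) = x := by
  induction x using Finsupp.induction_linear with
  | zero => simp
  | add a b ha hb => simp [map_add, ha, hb]
  | single a b => rw [cone_single, contr_single_mem]

theorem contr_incl (Γ : Set (Finset V)) (v : V) (c : ℕ) (x : Chains K (del Γ v) (c + 1)) :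
    contr K Γ v c (incl K (del_subset Γ v) (c + 1) x) = 0 := by
  induction x using Finsupp.induction_linear with
  | zero => simp
  | add a b ha hb => simp [map_add, ha, hb]
  | single a b => rw [incl_single]; exact contr_single_not_mem K Γ v c _ a.2.1.2 b

theorem exists_of_contr_zero (Γ : Set (Finset V)) (v : V) (c : ℕ)
    (z : Chains K Γ (c + 1)) (hz : contr K Γ v c z = 0) :
    ∃ x : Chains K (del Γ v) (c + 1), incl K (del_subset Γ v) (c + 1) x = z := by
  refine ⟨Finsupp.comapDomain (inclF (del_subset Γ v) (c + 1)) z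
    ((inclF_inj (del_subset Γ v) (c + 1)).injOn), ?_⟩
  have hlm : ∀ x : Chains K (del Γ v) (c + 1), incl K (del_subset Γ v) (c + 1) x
      = Finsupp.mapDomain (inclF (del_subset Γ v) (c + 1)) x := fun x => rfl
  rw [hlm]
  ext s
  by_cases hv : v ∈ s.1
  · rw [Finsupp.mapDomain_notin_range]
    · have hs : s.1.erase v ∈ link Γ {v} := by
        constructor
        · simp
        · rw [Finset.union_comm, ← Finset.insert_eq, Finset.insert_erase hv]; exact s.2.1
      have hc : (s.1.erase v).card = c := by
        rw [Finset.card_erase_of_mem hv, s.2.2]; rfl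
      have h0 := DFunLike.congr_fun hz ⟨s.1.erase v, hs, hc⟩
      rw [Finsupp.coe_zero, Pi.zero_apply] at h0
      have h1 : z (coneF Γ v c ⟨s.1.erase v, hs, hc⟩) = z s := by
        congr 1
        apply Subtype.ext
        exact Finset.insert_erase hv
      rw [← h1]
      exact h0.symm
    · rintro ⟨a, ha⟩
      apply a.2.1.2
      rw [show a.1 = s.1 from congrArg Subtype.val ha]
      exact hv
  · have hs' : s.1 ∈ del Γ v := ⟨s.2.1, hv⟩
    have : s = inclF (del_subset Γ v) (c + 1) ⟨s.1, hs', s.2.2⟩ := Subtype.ext rfl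
    rw [this, Finsupp.mapDomain_apply (inclF_inj (del_subset Γ v) (c + 1))]
    rfl


set_option linter.unusedSectionVars false

theorem bdry_single {Γ : Set (Finset V)} (hΓ : IsDown Γ) (c : ℕ)
    (s : {s : Finset V // s ∈ Γ ∧ s.card = c + 1}) (b : K) :
    bdry K hΓ c (Finsupp.single s b) = b • faceBdry K hΓ c s := by
  rw [bdry, Finsupp.lsum_single, LinearMap.toSpanSingleton_apply]

theorem incl_faceBdry {Γ₁ Γ₂ : Set (Finset V)} (h1 : IsDown Γ₁) (h2 : IsDown Γ₂)
    (h : Γ₁ ⊆ Γ₂) (c : ℕ) (s : {s : Finset V // s ∈ Γ₁ ∧ s.card = c + 1}) :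
    incl K h c (faceBdry K h1 c s) = faceBdry K h2 c (inclF h (c + 1) s) := by
  rw [faceBdry, map_sum, faceBdry]
  apply Finset.sum_congr rfl
  intro x _
  rw [map_smul, incl_single]
  rfl

theorem bdry_incl {Γ₁ Γ₂ : Set (Finset V)} (h1 : IsDown Γ₁) (h2 : IsDown Γ₂)
    (h : Γ₁ ⊆ Γ₂) (c : ℕ) (z : Chains K Γ₁ (c + 1)) :
    bdry K h2 c (incl K h (c + 1) z) = incl K h c (bdry K h1 c z) := by
  induction z using Finsupp.induction_linear with
  | zero => simp
  | add a b ha hb => simp [map_add, ha, hb]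
  | single a b =>
    rw [incl_single, bdry_single, bdry_single, map_smul, incl_faceBdry K h1 h2]

theorem link_subset {Γ : Set (Finset V)} (hΓ : IsDown Γ) (v : V) : link Γ {v} ⊆ Γ :=
  (link_subset_del hΓ v).trans (del_subset Γ v)

theorem mem_of_link_erase {Γ : Set (Finset V)} (hΓ : IsDown Γ) {v : V} {t : Finset V}
    (ht : t ∈ link Γ {v}) (x : V) : t.erase x ∈ link Γ {v} :=
  link_down hΓ {v} t ht _ (Finset.erase_subset _ _)

theorem insert_erase_mem {Γ : Set (Finset V)} (hΓ : IsDown Γ) {v : V} {t : Finset V}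
    (ht : t ∈ link Γ {v}) (x : V) : insert v (t.erase x) ∈ Γ :=
  insert_mem_of_link (mem_of_link_erase hΓ ht x)

theorem insert_erase_card {v : V} {t : Finset V} {c : ℕ} (hvt : v ∉ t)
    (htc : t.card = c) (x : {x // x ∈ t}) : (insert v (t.erase x.1)).card = c := by
  have h0 : 0 < c := htc ▸ Finset.card_pos.2 ⟨x.1, x.2⟩
  rw [Finset.card_insert_of_notMem (fun h => hvt (Finset.mem_of_mem_erase h)),
    Finset.card_erase_of_mem x.2, htc]
  omega

theorem lt_of_mem_link {Γ : Set (Finset V)} {v : V} (hv : ∀ f ∈ Γ, ∀ x ∈ f, x ≤ v)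
    {t : Finset V} (ht : t ∈ link Γ {v}) : ∀ x ∈ t, x < v := by
  intro x hx
  have hle : x ≤ v := hv _ (insert_mem_of_link ht) x (Finset.mem_insert_of_mem hx)
  exact lt_of_le_of_ne hle (fun h => not_mem_of_link ht (h ▸ hx))

theorem sgl_congr {Γ : Set (Finset V)} {c : ℕ} (a b : ℕ)
    (x y : {s : Finset V // s ∈ Γ ∧ s.card = c}) (h1 : a = b) (h2 : x.1 = y.1) :
    ((-1 : K) ^ a) • Finsupp.single x (1 : K) = ((-1 : K) ^ b) • Finsupp.single y 1 := by
  subst h1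
  rw [Subtype.ext h2]

theorem faceBdry_coneF {Γ : Set (Finset V)} (hΓ : IsDown Γ) {v : V}
    (hv : ∀ f ∈ Γ, ∀ x ∈ f, x ≤ v) (c : ℕ)
    (t : {t : Finset V // t ∈ link Γ {v} ∧ t.card = c}) :
    faceBdry K hΓ c (coneF Γ v c t) =
      ((-1 : K) ^ c) • Finsupp.single (inclF (link_subset hΓ v) c t) 1 +
      ∑ x ∈ t.1.attach, ((-1 : K) ^ ((t.1.filter (fun w => w < x.1)).card)) •
        Finsupp.single
          ⟨insert v (t.1.erase x.1), insert_erase_mem hΓ t.2.1 x.1,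
            insert_erase_card (not_mem_of_link t.2.1) t.2.2 x⟩ 1 := by
  have hvt : ∀ x ∈ t.1, x < v := lt_of_mem_link hv t.2.1
  have hvnt : v ∉ t.1 := not_mem_of_link t.2.1
  rw [faceBdry]
  show ∑ x ∈ (insert v t.1).attach, _ = _
  rw [Finset.attach_insert, Finset.sum_insert (by
    simp only [Finset.mem_image]
    rintro ⟨x, -, hx⟩
    have hxv : x.1 = v := Subtype.mk_eq_mk.mp hx
    have hx2 := x.2
    rw [hxv] at hx2
    exact hvnt hx2),
    Finset.sum_image (by
      intro x _ y _ hxy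
      exact Subtype.ext (Subtype.mk_eq_mk.mp hxy))]
  congr 1
  · -- the v-term
    refine sgl_congr K _ _ _ _ ?_ ?_
    · show ((insert v t.1).filter (fun w => w < v)).card = c
      rw [Finset.filter_insert, if_neg (lt_irrefl v), Finset.filter_true_of_mem hvt, t.2.2]
    · show (insert v t.1).erase v = t.1
      exact Finset.erase_insert hvnt
  · -- the image terms
    apply Finset.sum_congr rfl
    intro x _
    refine sgl_congr K _ _ _ _ ?_ ?_
    · show ((insert v t.1).filter (fun w => w < x.1)).card = _
      rw [Finset.filter_insert, if_neg (lt_asymm (hvt x.1 x.2))]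
    · show (insert v t.1).erase x.1 = insert v (t.1.erase x.1)
      refine Finset.erase_insert_of_ne (fun h => ?_)
      have h2 := hvt x.1 x.2
      rw [← h] at h2
      exact lt_irrefl v h2


theorem bdry_cone_zero {Γ : Set (Finset V)} (hΓ : IsDown Γ) {v : V}
    (hv : ∀ f ∈ Γ, ∀ x ∈ f, x ≤ v) (x : Chains K (link Γ {v}) 0) :
    bdry K hΓ 0 (cone K Γ v 0 x) = incl K (link_subset hΓ v) 0 x := by
  induction x using Finsupp.induction_linear with
  | zero => simp
  | add a b ha hb => simp [map_add, ha, hb]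
  | single a b =>
    rw [cone_single, bdry_single, faceBdry_coneF K hΓ hv 0 a, incl_single]
    have haa : a.1.attach = ∅ := Finset.attach_eq_empty_iff.2 (Finset.card_eq_zero.1 a.2.2)
    rw [haa, Finset.sum_empty, add_zero, pow_zero, one_smul, Finsupp.smul_single,
      smul_eq_mul, mul_one]

theorem bdry_cone_succ {Γ : Set (Finset V)} (hΓ : IsDown Γ) {v : V}
    (hv : ∀ f ∈ Γ, ∀ x ∈ f, x ≤ v) (c : ℕ) (x : Chains K (link Γ {v}) (c + 1)) :
    bdry K hΓ (c + 1) (cone K Γ v (c + 1) x) =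
      ((-1 : K) ^ (c + 1)) • incl K (link_subset hΓ v) (c + 1) x
        + cone K Γ v c (bdry K (link_down hΓ {v}) c x) := by
  induction x using Finsupp.induction_linear with
  | zero => simp
  | add a b ha hb => simp only [map_add, smul_add, ha, hb]; abel
  | single a b =>
    rw [cone_single, bdry_single, faceBdry_coneF K hΓ hv (c + 1) a, incl_single,
      bdry_single, map_smul, smul_add]
    congr 1
    · rw [smul_comm, Finsupp.smul_single, smul_eq_mul, mul_one]
    · congr 1
      rw [faceBdry, map_sum]
      apply Finset.sum_congr rfl
      intro x _
      rw [map_smul, cone_single]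
      exact sgl_congr K _ _ _ _ rfl rfl

theorem contr_bdry {Γ : Set (Finset V)} (hΓ : IsDown Γ) {v : V}
    (hv : ∀ f ∈ Γ, ∀ x ∈ f, x ≤ v) (c : ℕ) (z : Chains K Γ (c + 2)) :
    contr K Γ v c (bdry K hΓ (c + 1) z) =
      bdry K (link_down hΓ {v}) c (contr K Γ v (c + 1) z) := by
  induction z using Finsupp.induction_linear with
  | zero => simp
  | add a b ha hb => simp [map_add, ha, hb]
  | single s b =>
    by_cases hvs : v ∈ s.1
    · have htm : s.1.erase v ∈ link Γ {v} := by
        constructor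
        · simp
        · rw [Finset.union_comm, ← Finset.insert_eq, Finset.insert_erase hvs]; exact s.2.1
      have htc : (s.1.erase v).card = c + 1 := by
        rw [Finset.card_erase_of_mem hvs, s.2.2]; omega
      -- (c+2)-1 = c+1 definitionally
      set t : {t : Finset V // t ∈ link Γ {v} ∧ t.card = c + 1} := ⟨s.1.erase v, htm, htc⟩
        with ht
      have hst : s = coneF Γ v (c + 1) t := Subtype.ext (Finset.insert_erase hvs).symm
      rw [hst, bdry_single, faceBdry_coneF K hΓ hv (c + 1) t, map_smul, map_add, map_smul]
      rw [contr_single_not_mem K Γ v c (inclF (link_subset hΓ v) (c + 1) t)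
        (not_mem_of_link t.2.1) 1]
      rw [contr_single_mem, bdry_single, map_sum]
      rw [smul_zero, zero_add, faceBdry]
      congr 1
      apply Finset.sum_congr rfl
      intro x _
      rw [map_smul]
      have hkey : contr K Γ v c (Finsupp.single
          ⟨insert v (t.1.erase x.1), insert_erase_mem hΓ t.2.1 x.1,
            insert_erase_card (not_mem_of_link t.2.1) t.2.2 x⟩ (1 : K)) =
          Finsupp.single ⟨t.1.erase x.1, mem_of_link_erase hΓ t.2.1 x.1,
            by rw [Finset.card_erase_of_mem x.2, t.2.2]; omega⟩ 1 :=
        contr_single_mem K Γ v c ⟨t.1.erase x.1, mem_of_link_erase hΓ t.2.1 x.1,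
          by rw [Finset.card_erase_of_mem x.2, t.2.2]; omega⟩ 1
      rw [hkey]
    · rw [bdry_single, map_smul, contr_single_not_mem K Γ v (c + 1) s hvs b, map_zero]
      rw [faceBdry, map_sum]
      have : ∀ x ∈ s.1.attach, contr K Γ v c (((-1 : K) ^ ((s.1.filter (fun w => w < x.1)).card)) •
          Finsupp.single ⟨s.1.erase x.1, hΓ _ s.2.1 _ (Finset.erase_subset _ _), by
            simp [Finset.card_erase_of_mem x.2, s.2.2]⟩ (1 : K)) = 0 := by
        intro x _
        rw [map_smul, contr_single_not_mem K Γ v c _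
          (fun h => hvs (Finset.mem_of_mem_erase h)) 1, smul_zero]
      rw [Finset.sum_congr rfl this, Finset.sum_const_zero, smul_zero]

theorem bdry_cone_of_cycle {Γ : Set (Finset V)} (hΓ : IsDown Γ) {v : V}
    (hv : ∀ f ∈ Γ, ∀ x ∈ f, x ≤ v) (j : ℕ) (x : Chains K (link Γ {v}) j)
    (hx : x ∈ cycles K (link_down hΓ {v}) j) :
    bdry K hΓ j (cone K Γ v j x) = ((-1 : K) ^ j) • incl K (link_subset hΓ v) j x := by
  cases j with
  | zero => rw [bdry_cone_zero K hΓ hv, pow_zero, one_smul]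
  | succ c =>
    have hx' : bdry K (link_down hΓ {v}) c x = 0 := hx
    rw [bdry_cone_succ K hΓ hv, hx', map_zero, add_zero]

/-- Nontrivial reduced homology, witnessed by an explicit cycle that is not a boundary. -/
def HomNT {Γ : Set (Finset V)} (hΓ : IsDown Γ) (c : ℕ) : Prop :=
  ∃ z : Chains K Γ c, z ∈ cycles K hΓ c ∧ z ∉ LinearMap.range (bdry K hΓ c)

theorem homNT_iff_nontrivial {Γ : Set (Finset V)} (hΓ : IsDown Γ) (c : ℕ) :
    Nontrivial (RH K hΓ c) ↔ HomNT K hΓ c := by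
  rw [← not_subsingleton_iff_nontrivial]
  have hss : Subsingleton (RH K hΓ c) ↔
      (Submodule.comap (cycles K hΓ c).subtype (LinearMap.range (bdry K hΓ c))) = ⊤ :=
    Submodule.Quotient.subsingleton_iff
  rw [hss, Submodule.comap_subtype_eq_top, SetLike.not_le_iff_exists]
  rfl

theorem homNT_congr {Γ₁ Γ₂ : Set (Finset V)} (h₁ : IsDown Γ₁) (h₂ : IsDown Γ₂)
    (hEq : Γ₁ = Γ₂) (c : ℕ) (h : HomNT K h₁ c) : HomNT K h₂ c := by
  subst hEq
  exact h

theorem exists_face_of_ne_zero {Γ : Set (Finset V)} {c : ℕ} {z : Chains K Γ c}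
    (hz : z ≠ 0) : ∃ f : Finset V, f ∈ Γ ∧ f.card = c := by
  obtain ⟨a, _⟩ := Finsupp.support_nonempty_iff.2 hz
  exact ⟨a.1, a.2.1, a.2.2⟩

theorem incl_mem_cycles {Γ₁ Γ₂ : Set (Finset V)} (h₁ : IsDown Γ₁) (h₂ : IsDown Γ₂)
    (hsub : Γ₁ ⊆ Γ₂) (j : ℕ) (z : Chains K Γ₁ j) (hz : z ∈ cycles K h₁ j) :
    incl K hsub j z ∈ cycles K h₂ j := by
  cases j with
  | zero => trivial
  | succ c =>
    show incl K hsub (c + 1) z ∈ LinearMap.ker (bdry K h₂ c)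
    rw [LinearMap.mem_ker, bdry_incl K h₁ h₂ hsub c z,
      show bdry K h₁ c z = 0 from hz, map_zero]

/-- Key dichotomy: a nontrivial homology class on the deletion lifts either to
the complex itself or to the link of the deleted vertex (one degree down is not
needed here; same degree). -/
theorem descend (Γ : Set (Finset V)) (hΓ : IsDown Γ) (v : V)
    (hv : ∀ f ∈ Γ, ∀ x ∈ f, x ≤ v) (j : ℕ)
    (h : HomNT K (del_down hΓ v) j) :
    HomNT K hΓ j ∨ HomNT K (link_down hΓ {v}) j := by
  obtain ⟨y, hy, hyb⟩ := h
  by_cases hin : incl K (del_subset Γ v) j y ∈ LinearMap.range (bdry K hΓ j)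
  · right
    obtain ⟨u, hu⟩ := hin
    have hΛ := link_down hΓ {v}
    set u₁ := contr K Γ v j u with hu₁def
    have hu₁cyc : u₁ ∈ cycles K (link_down hΓ {v}) j := by
      cases j with
      | zero => trivial
      | succ c =>
        show u₁ ∈ LinearMap.ker (bdry K (link_down hΓ {v}) c)
        rw [LinearMap.mem_ker, hu₁def, ← contr_bdry K hΓ hv c u, hu, contr_incl]
    by_cases hbd : u₁ ∈ LinearMap.range (bdry K (link_down hΓ {v}) j)
    · exfalso
      obtain ⟨w₁, hw₁⟩ := hbd
      set u' : Chains K Γ (j + 1) := u - ((-1 : K) ^ (j + 1)) •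
          incl K (link_subset hΓ v) (j + 1) w₁ - cone K Γ v j u₁ with hu'def
      have hcu' : contr K Γ v j u' = 0 := by
        rw [hu'def, map_sub, map_sub, map_smul,
          ← incl_incl K (link_subset_del hΓ v) (del_subset Γ v) (j + 1) w₁,
          contr_incl, smul_zero, sub_zero, contr_cone, sub_self]
      obtain ⟨u₀, hu₀⟩ := exists_of_contr_zero K Γ v j u' hcu'
      have hbu' : bdry K hΓ j u' = incl K (del_subset Γ v) j y := by
        rw [hu'def, map_sub, map_sub, map_smul, hu,
          bdry_incl K (link_down hΓ {v}) hΓ (link_subset hΓ v) j w₁, hw₁,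
          bdry_cone_of_cycle K hΓ hv j u₁ hu₁cyc,
          show ((-1 : K) ^ (j + 1)) = -(-1 : K) ^ j by ring, neg_smul, sub_neg_eq_add,
          add_sub_cancel_right]
      apply hyb
      refine ⟨u₀, ?_⟩
      apply incl_inj K (del_subset Γ v) j
      rw [← bdry_incl K (del_down hΓ v) hΓ (del_subset Γ v) j u₀, hu₀, hbu']
    · exact ⟨u₁, hu₁cyc, hbd⟩
  · left
    exact ⟨incl K (del_subset Γ v) j y,
      incl_mem_cycles K (del_down hΓ v) hΓ (del_subset Γ v) j y hy, hin⟩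

theorem link_del_eq (Γ : Set (Finset V)) (v : V) (g : Finset V) (hvg : v ∉ g) :
    link (del Γ v) g = del (link Γ g) v := by
  ext τ
  constructor
  · rintro ⟨hd, hu, hnv⟩
    exact ⟨⟨hd, hu⟩, fun hvτ => hnv (Finset.mem_union_left g hvτ)⟩
  · rintro ⟨⟨hd, hu⟩, hnv⟩
    refine ⟨hd, hu, fun hvτ => ?_⟩
    rcases Finset.mem_union.1 hvτ with h | h
    · exact hnv h
    · exact hvg h

theorem link_link_eq (Γ : Set (Finset V)) (v : V) (g : Finset V) (hvg : v ∉ g) :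
    link (link Γ g) {v} = link Γ (insert v g) := by
  ext τ
  have hassoc : (τ ∪ {v}) ∪ g = τ ∪ insert v g := by
    rw [Finset.union_assoc, Finset.insert_eq]
  constructor
  · rintro ⟨hd, hdg, hu⟩
    have hvτ : v ∉ τ := Finset.disjoint_singleton_right.1 hd
    rw [Finset.disjoint_union_left] at hdg
    refine ⟨?_, ?_⟩
    · rw [Finset.disjoint_insert_right]
      exact ⟨hvτ, hdg.1⟩
    · rwa [hassoc] at hu
  · rintro ⟨hd, hu⟩
    rw [Finset.disjoint_insert_right] at hd
    refine ⟨Finset.disjoint_singleton_right.2 hd.1, ?_, ?_⟩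
    · rw [Finset.disjoint_union_left]
      exact ⟨hd.2, Finset.disjoint_singleton_left.2 hvg⟩
    · rwa [hassoc]

theorem link_link_eq' (Γ : Set (Finset V)) (σ g : Finset V) (hd : Disjoint g σ) :
    link (link Γ σ) g = link Γ (σ ∪ g) := by
  ext τ
  constructor
  · rintro ⟨hdg, hds, hu⟩
    rw [Finset.disjoint_union_left] at hds
    refine ⟨?_, ?_⟩
    · rw [Finset.disjoint_union_right]
      exact ⟨hds.1, hdg⟩
    · rwa [show (τ ∪ g) ∪ σ = τ ∪ (σ ∪ g) by
        rw [Finset.union_assoc, Finset.union_comm g σ]] at hu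
  · rintro ⟨hdτ, hu⟩
    rw [Finset.disjoint_union_right] at hdτ
    refine ⟨hdτ.2, ?_, ?_⟩
    · rw [Finset.disjoint_union_left]
      exact ⟨hdτ.1, hd⟩
    · rwa [show (τ ∪ g) ∪ σ = τ ∪ (σ ∪ g) by
        rw [Finset.union_assoc, Finset.union_comm g σ]]

/-- Main combinatorial lemma: a complex with nontrivial reduced homology in
cardinality degree `j+1` has a nonempty face whose link has nontrivial reduced
homology in cardinality degree `j`. By induction on the allowed vertex set. -/
theorem main (n : ℕ) : ∀ (W : Finset V), W.card ≤ n →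
    ∀ (Γ : Set (Finset V)) (hΓ : IsDown Γ), (∀ f ∈ Γ, f ⊆ W) →
    ∀ j : ℕ, HomNT K hΓ (j + 1) →
    ∃ g, g ∈ Γ ∧ g ≠ ∅ ∧ HomNT K (link_down hΓ g) j := by
  induction n with
  | zero =>
    intro W hW Γ hΓ hsub j h
    exfalso
    obtain ⟨z, hz, hzb⟩ := h
    have hz0 : z ≠ 0 := fun h0 => hzb (h0 ▸ zero_mem _)
    obtain ⟨f, hf, hfc⟩ := exists_face_of_ne_zero K hz0
    have hW0 : W = ∅ := Finset.card_eq_zero.1 (Nat.le_zero.1 hW)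
    have : f = ∅ := Finset.subset_empty.1 (hW0 ▸ hsub f hf)
    rw [this] at hfc
    simp at hfc
  | succ n ih =>
    intro W hWn Γ hΓ hsub j h
    obtain ⟨z, hz, hzb⟩ := h
    have hz0 : z ≠ 0 := fun h0 => hzb (h0 ▸ zero_mem _)
    obtain ⟨f, hf, hfc⟩ := exists_face_of_ne_zero K hz0
    have hWne : W.Nonempty := by
      rcases Finset.eq_empty_or_nonempty W with hW0 | hW0
      · exfalso
        have : f = ∅ := Finset.subset_empty.1 (hW0 ▸ hsub f hf)
        rw [this] at hfc
        simp at hfc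
      · exact hW0
    set v := W.max' hWne with hvdef
    have hv : ∀ f ∈ Γ, ∀ x ∈ f, x ≤ v := fun f hf x hx => W.le_max' x (hsub f hf hx)
    have hzc : bdry K hΓ j z = 0 := hz
    set z₁ := contr K Γ v j z with hz₁def
    have hz₁cyc : z₁ ∈ cycles K (link_down hΓ {v}) j := by
      cases j with
      | zero => trivial
      | succ c =>
        show z₁ ∈ LinearMap.ker (bdry K (link_down hΓ {v}) c)
        rw [LinearMap.mem_ker, hz₁def, ← contr_bdry K hΓ hv c z, hzc, map_zero]
    by_cases hz₁b : z₁ ∈ LinearMap.range (bdry K (link_down hΓ {v}) j)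
    · -- the contraction is a boundary: pass to the deletion
      obtain ⟨w, hw⟩ := hz₁b
      set z' : Chains K Γ (j + 1) := z - ((-1 : K) ^ (j + 1)) •
          incl K (link_subset hΓ v) (j + 1) w - cone K Γ v j z₁ with hz'def
      have hcz' : contr K Γ v j z' = 0 := by
        rw [hz'def, map_sub, map_sub, map_smul,
          ← incl_incl K (link_subset_del hΓ v) (del_subset Γ v) (j + 1) w,
          contr_incl, smul_zero, sub_zero, contr_cone, sub_self]
      obtain ⟨z₀, hz₀⟩ := exists_of_contr_zero K Γ v j z' hcz'
      have hbz' : bdry K hΓ j z' = 0 := by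
        rw [hz'def, map_sub, map_sub, map_smul, hzc,
          bdry_incl K (link_down hΓ {v}) hΓ (link_subset hΓ v) j w, hw,
          bdry_cone_of_cycle K hΓ hv j z₁ hz₁cyc,
          show ((-1 : K) ^ (j + 1)) = -(-1 : K) ^ j by ring, neg_smul, sub_neg_eq_add,
          zero_add, sub_self]
      have hz₀cyc : z₀ ∈ cycles K (del_down hΓ v) (j + 1) := by
        show z₀ ∈ LinearMap.ker (bdry K (del_down hΓ v) j)
        rw [LinearMap.mem_ker]
        apply incl_inj K (del_subset Γ v) j
        rw [← bdry_incl K (del_down hΓ v) hΓ (del_subset Γ v) j z₀, hz₀, hbz', map_zero]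
      have hz₀b : z₀ ∉ LinearMap.range (bdry K (del_down hΓ v) (j + 1)) := by
        rintro ⟨p, hp⟩
        apply hzb
        have h1 : z' = bdry K hΓ (j + 1) (incl K (del_subset Γ v) (j + 2) p) := by
          rw [bdry_incl K (del_down hΓ v) hΓ (del_subset Γ v) (j + 1) p, hp, hz₀]
        have h2 : z - z' = bdry K hΓ (j + 1) (cone K Γ v (j + 1) w) := by
          rw [bdry_cone_succ K hΓ hv j w, hw, hz'def]
          abel
        refine ⟨incl K (del_subset Γ v) (j + 2) p + cone K Γ v (j + 1) w, ?_⟩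
        rw [map_add, ← h1, ← h2]
        abel
      have hsub' : ∀ f ∈ del Γ v, f ⊆ W.erase v := fun f hf =>
        Finset.subset_erase.2 ⟨hsub f hf.1, hf.2⟩
      have hcard : (W.erase v).card ≤ n := by
        have hvW : v ∈ W := W.max'_mem hWne
        have h3 := Finset.card_erase_of_mem hvW
        have h4 : 0 < W.card := Finset.card_pos.2 hWne
        omega
      obtain ⟨g, hgD, hgne, hgH⟩ := ih (W.erase v) hcard (del Γ v) (del_down hΓ v) hsub' j
        ⟨z₀, hz₀cyc, hz₀b⟩
      have hvg : v ∉ g := hgD.2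
      have hgH' : HomNT K (del_down (link_down hΓ g) v) j :=
        homNT_congr K (link_down (del_down hΓ v) g) (del_down (link_down hΓ g) v)
          (link_del_eq Γ v g hvg) j hgH
      have hvS : ∀ f ∈ link Γ g, ∀ x ∈ f, x ≤ v := fun f hf x hx =>
        hv _ hf.2 x (Finset.mem_union_left g hx)
      rcases descend K (link Γ g) (link_down hΓ g) v hvS j hgH' with hL | hR
      · exact ⟨g, hgD.1, hgne, hL⟩
      · have hgH'' : HomNT K (link_down hΓ (insert v g)) j :=
          homNT_congr K _ _ (link_link_eq Γ v g hvg) j hR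
        have hmem : insert v g ∈ Γ := by
          obtain ⟨y2, -, hy2b⟩ := hgH''
          have hy20 : y2 ≠ 0 := fun h0 => hy2b (h0 ▸ zero_mem _)
          obtain ⟨t, ht, -⟩ := exists_face_of_ne_zero K hy20
          exact hΓ _ ht.2 _ Finset.subset_union_right
        exact ⟨insert v g, hmem, Finset.insert_ne_empty v g, hgH''⟩
    · -- Case A : the link of `v` carries the homology
      have hz₁0 : z₁ ≠ 0 := fun h0 => hz₁b (h0 ▸ zero_mem _)
      obtain ⟨t, ht, htc⟩ := exists_face_of_ne_zero K hz₁0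
      have hvmem : {v} ∈ Γ := by
        apply hΓ _ (insert_mem_of_link ht)
        intro x hx
        rw [Finset.mem_singleton.1 hx]
        exact Finset.mem_insert_self v t
      exact ⟨{v}, hvmem, Finset.singleton_ne_empty v, z₁, hz₁cyc, hz₁b⟩

end SRAux

open SRAux



open SRPure in
/-- (Homology of descending links.)  If `Δ` is a PR complex over `K`
and `σ ∈ Δ` has `H̃_j(link_Δ σ; K) ≠ 0` for some `j ≥ 0` (cardinality index `j + 1`),
then there is a face `τ ∈ Δ` strictly containing `σ` with `H̃_{j-1}(link_Δ τ; K) ≠ 0`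
(cardinality index `j`). -/
theorem exists_larger_face_with_lower_link_homology
    {V : Type*} [LinearOrder V] [Fintype V] (K : Type*) [Field K]
    (Δ : Set (Finset V)) (hΔ : IsDown Δ) (hPR : IsPR K hΔ)
    (σ : Finset V) (hσ : σ ∈ Δ) (j : ℕ)
    (h : Nontrivial (RH K (link_down hΔ σ) (j + 1))) :
    ∃ τ ∈ Δ, σ ⊂ τ ∧ Nontrivial (RH K (link_down hΔ τ) j) := by

  have h' : HomNT K (link_down hΔ σ) (j + 1) :=
    (homNT_iff_nontrivial K (link_down hΔ σ) (j + 1)).1 h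
  obtain ⟨g, hg, hgne, hgH⟩ := main K (Finset.univ (α := V)).card Finset.univ le_rfl
    (link Δ σ) (link_down hΔ σ) (fun f _ => Finset.subset_univ f) j h'
  have hdisj : Disjoint g σ := hg.1
  have hτ : σ ∪ g ∈ Δ := by
    have h2 := hg.2
    rwa [Finset.union_comm] at h2
  refine ⟨σ ∪ g, hτ, ?_, ?_⟩
  · refine Finset.ssubset_iff_subset_ne.2 ⟨Finset.subset_union_left, ?_⟩
    intro hEq
    obtain ⟨x, hx⟩ := Finset.nonempty_iff_ne_empty.2 hgne
    have hxσ : x ∈ σ := by rw [hEq]; exact Finset.mem_union_right σ hx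
    exact (Finset.disjoint_left.1 hdisj hx) hxσ
  · exact (homNT_iff_nontrivial K (link_down hΔ (σ ∪ g)) j).2
      (homNT_congr K (link_down (link_down hΔ σ) g) (link_down hΔ (σ ∪ g))
        (link_link_eq' Δ σ g hdisj) j hgH)
end

section
/- Let Δ be a pure simplicial complex on vertex set V, let i ≥ 1, and let σ be a face of Δ. Then there is an isomorphism of simplicial complexes link_{φ_i(Δ)}(σ) ≅ φ_i(link_Δ(σ)), given on the new vertices by u_τ ↦ u_{τ∖σ}. -/
open Finset

/-- The complex `φ_i(Δ)` on the vertex set `V ⊔ S^i_Δ`, where `D = dim Δ + 1` is the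
common cardinality of the facets of the pure complex `Δ`: new vertices `u_τ = Sum.inr τ`
exist for faces `τ` with `|τ| ≥ D + 1 - i`, and the faces of `φ_i(Δ)` are the sets
`σ ⊔ {u_{τ_1}, …, u_{τ_r}}` for chains `σ ⊆ τ_1 ⊂ … ⊂ τ_r` in `Δ`. -/
def phiC {V : Type*} [DecidableEq V] (Δ : Set (Finset V)) (D i : ℕ) :
    Set (Finset (V ⊕ Finset V)) :=
  {F | ∃ σ ∈ Δ, ∃ c : Finset (Finset V),
      (∀ τ ∈ c, τ ∈ Δ ∧ σ ⊆ τ ∧ D + 1 ≤ τ.card + i) ∧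
      (∀ τ₁ ∈ c, ∀ τ₂ ∈ c, τ₁ ⊆ τ₂ ∨ τ₂ ⊆ τ₁) ∧
      F = σ.image Sum.inl ∪ c.image Sum.inr}

open SRPure in
private lemma link_mem_structure {V : Type*} [DecidableEq V]
    {Δ : Set (Finset V)} {D i : ℕ} {σ : Finset V}
    {F : Finset (V ⊕ Finset V)}
    (hF : F ∈ link (phiC Δ D i) (σ.image Sum.inl)) :
    ∃ ρ : Finset V, ∃ c : Finset (Finset V),
      (ρ ∪ σ) ∈ Δ ∧ Disjoint ρ σ ∧
      (∀ τ ∈ c, τ ∈ Δ ∧ σ ⊆ τ ∧ ρ ⊆ τ ∧ D + 1 ≤ τ.card + i) ∧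
      (∀ τ₁ ∈ c, ∀ τ₂ ∈ c, τ₁ ⊆ τ₂ ∨ τ₂ ⊆ τ₁) ∧
      F = ρ.image Sum.inl ∪ c.image Sum.inr := by
  obtain ⟨hdisj, σ', hσ', c, hc, hchain, hEq⟩ := hF
  have hσσ' : σ ⊆ σ' := by
    intro v hv
    have : (Sum.inl v : V ⊕ Finset V) ∈ F ∪ σ.image Sum.inl :=
      Finset.mem_union_right _ (Finset.mem_image_of_mem _ hv)
    rw [hEq] at this
    rcases Finset.mem_union.1 this with h | h
    · rcases Finset.mem_image.1 h with ⟨w, hw, hwv⟩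
      cases hwv; exact hw
    · rcases Finset.mem_image.1 h with ⟨τ, _, hτ⟩
      exact absurd hτ (by simp)
  refine ⟨σ' \ σ, c, ?_, Finset.sdiff_disjoint, ?_, hchain, ?_⟩
  · rwa [Finset.sdiff_union_of_subset hσσ']
  · intro τ hτ
    obtain ⟨h1, h2, h3⟩ := hc τ hτ
    exact ⟨h1, hσσ'.trans h2, (Finset.sdiff_subset).trans h2, h3⟩
  · have key : ∀ x, x ∈ F ↔ (x ∈ σ'.image Sum.inl ∪ c.image Sum.inr) ∧ x ∉ σ.image Sum.inl := by
      intro x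
      constructor
      · intro hx
        exact ⟨hEq ▸ Finset.mem_union_left _ hx, Finset.disjoint_left.1 hdisj hx⟩
      · rintro ⟨hx, hx'⟩
        have : x ∈ F ∪ σ.image Sum.inl := hEq ▸ hx
        rcases Finset.mem_union.1 this with h | h
        · exact h
        · exact absurd h hx'
    ext x
    rw [key]
    cases x with
    | inl v => simp [Finset.mem_sdiff]
    | inr τ => simp

private lemma image_map_union {V : Type*} [DecidableEq V] (h : Finset V → Finset V)
    (ρ : Finset V) (c : Finset (Finset V)) :
    (ρ.image Sum.inl ∪ c.image Sum.inr).image (Sum.map id h) =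
      ρ.image Sum.inl ∪ (c.image h).image Sum.inr := by
  rw [Finset.image_union, Finset.image_image, Finset.image_image, Finset.image_image]
  rfl

open SRPure in
/-- For a pure complex `Δ` (all facets of cardinality `D`), `i ≥ 1`
and a face `σ ∈ Δ`, the map sending a face of `link_{φ_i(Δ)}(σ)` to its image under the
vertex map `u_τ ↦ u_{τ \ σ}` (and the identity on old vertices) is an isomorphism of
simplicial complexes `link_{φ_i(Δ)}(σ) ≅ φ_i(link_Δ σ)`. -/
theorem link_phiC_bijOn {V : Type*} [DecidableEq V]
    (Δ : Set (Finset V)) (hΔ : IsDown Δ)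
    (D : ℕ) (hD : ∀ s ∈ Δ, s.card ≤ D)
    (hpure : ∀ F : Finset V, IsFacet Δ F → F.card = D)
    (i : ℕ) (hi : 1 ≤ i) (σ : Finset V) (hσ : σ ∈ Δ) :
    Set.BijOn
      (fun F : Finset (V ⊕ Finset V) => F.image (Sum.map id fun τ => τ \ σ))
      (link (phiC Δ D i) (σ.image Sum.inl))
      (phiC (link Δ σ) (D - σ.card) i) := by
  have hσD : σ.card ≤ D := hD σ hσ
  have hmaps : Set.MapsTo
      (fun F : Finset (V ⊕ Finset V) => F.image (Sum.map id fun τ => τ \ σ))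
      (link (phiC Δ D i) (σ.image Sum.inl))
      (phiC (link Δ σ) (D - σ.card) i) := by
    intro F hF
    obtain ⟨ρ, c, hρ, hdρ, hc, hchain, rfl⟩ := link_mem_structure hF
    refine ⟨ρ, ⟨hdρ, hρ⟩, c.image (· \ σ), ?_, ?_, ?_⟩
    · intro τ' hτ'
      obtain ⟨τ, hτ, rfl⟩ := Finset.mem_image.1 hτ'
      obtain ⟨h1, h2, h3, h4⟩ := hc τ hτ
      refine ⟨⟨Finset.sdiff_disjoint, by rwa [Finset.sdiff_union_of_subset h2]⟩,
        Finset.subset_sdiff.2 ⟨h3, hdρ⟩, ?_⟩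
      have := Finset.card_sdiff_of_subset h2
      have := Finset.card_le_card h2
      omega
    · intro τ₁ hτ₁ τ₂ hτ₂
      obtain ⟨s₁, hs₁, rfl⟩ := Finset.mem_image.1 hτ₁
      obtain ⟨s₂, hs₂, rfl⟩ := Finset.mem_image.1 hτ₂
      rcases hchain s₁ hs₁ s₂ hs₂ with h | h
      · exact Or.inl (Finset.sdiff_subset_sdiff h Finset.Subset.rfl)
      · exact Or.inr (Finset.sdiff_subset_sdiff h Finset.Subset.rfl)
    · exact image_map_union _ ρ c
  refine ⟨hmaps, ?_, ?_⟩
  · -- InjOn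
    have hret : ∀ F ∈ link (phiC Δ D i) (σ.image Sum.inl),
        (F.image (Sum.map id fun τ => τ \ σ)).image (Sum.map id fun τ => τ ∪ σ) = F := by
      intro F hF
      obtain ⟨ρ, c, hρ, hdρ, hc, hchain, rfl⟩ := link_mem_structure hF
      have hcc : (c.image (fun τ => τ \ σ)).image (fun τ => τ ∪ σ) = c := by
        rw [Finset.image_image]
        refine (Finset.image_congr (fun τ hτ => ?_)).trans Finset.image_id
        exact Finset.sdiff_union_of_subset (hc τ hτ).2.1
      rw [image_map_union, image_map_union, hcc]
    intro F₁ h₁ F₂ h₂ heq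
    dsimp only at heq
    have h := hret F₁ h₁
    rw [heq, hret F₂ h₂] at h
    exact h.symm
  · -- SurjOn
    intro G hG
    obtain ⟨ρ, hρ, c, hc, hchain, rfl⟩ := hG
    obtain ⟨hdρ, hρΔ⟩ := hρ
    refine ⟨ρ.image Sum.inl ∪ (c.image (· ∪ σ)).image Sum.inr, ⟨?_, ?_⟩, ?_⟩
    · rw [Finset.disjoint_left]
      intro x hx hx'
      obtain ⟨v, hv, rfl⟩ := Finset.mem_image.1 hx'
      rcases Finset.mem_union.1 hx with h | h
      · obtain ⟨w, hw, hwv⟩ := Finset.mem_image.1 h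
        cases hwv
        exact Finset.disjoint_left.1 hdρ hw hv
      · obtain ⟨τ, _, hτ⟩ := Finset.mem_image.1 h
        exact absurd hτ (by simp)
    · have hEq : ρ.image Sum.inl ∪ (c.image (· ∪ σ)).image Sum.inr ∪ σ.image Sum.inl
          = (ρ ∪ σ).image Sum.inl ∪ (c.image (· ∪ σ)).image Sum.inr := by
        rw [Finset.image_union]
        ac_rfl
      rw [hEq]
      refine ⟨ρ ∪ σ, hρΔ, c.image (· ∪ σ), ?_, ?_, rfl⟩
      · intro τ' hτ'
        obtain ⟨τ, hτ, rfl⟩ := Finset.mem_image.1 hτ'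
        obtain ⟨⟨hdτ, hτΔ⟩, hρτ, hcard⟩ := hc τ hτ
        refine ⟨hτΔ, Finset.union_subset_union_left hρτ, ?_⟩
        have := Finset.card_union_of_disjoint hdτ
        omega
      · intro τ₁ hτ₁ τ₂ hτ₂
        obtain ⟨s₁, hs₁, rfl⟩ := Finset.mem_image.1 hτ₁
        obtain ⟨s₂, hs₂, rfl⟩ := Finset.mem_image.1 hτ₂
        rcases hchain s₁ hs₁ s₂ hs₂ with h | h
        · exact Or.inl (Finset.union_subset_union_left h)
        · exact Or.inr (Finset.union_subset_union_left h)
    · have hcc : ((c.image (fun τ => τ ∪ σ)).image (fun τ => τ \ σ)) = c := by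
        rw [Finset.image_image]
        refine (Finset.image_congr (fun τ hτ => ?_)).trans Finset.image_id
        exact Finset.union_sdiff_cancel_right ((hc τ hτ).1.1)
      dsimp only
      rw [image_map_union, hcc]
end

section
/- Let Δ be a simplicial complex and let σ = {u_{τ_1},…,u_{τ_r}} be a face of the barycentric subdivision B(Δ), corresponding to a chain of faces τ_1 ⊂ … ⊂ τ_r of Δ. Then there is an isomorphism of simplicial complexes link_{B(Δ)}(σ) ≅ B(link_Δ τ_r) * B(link_{∂τ_r} τ_{r−1}) * … * B(link_{∂τ_2} τ_1) * B(∂τ_1), where * denotes join and ∂τ denotes the boundary complex of the simplex on vertex set τ. -/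
open Finset

/-- The barycentric subdivision of `Δ`: vertices are the nonempty faces of `Δ` and the
faces are the chains of such faces. -/
def baryC {V : Type*} (Δ : Set (Finset V)) : Set (Finset (Finset V)) :=
  {C | (∀ τ ∈ C, τ ∈ Δ ∧ τ ≠ ∅) ∧ ∀ τ₁ ∈ C, ∀ τ₂ ∈ C, τ₁ ⊆ τ₂ ∨ τ₂ ⊆ τ₁}

/-- The boundary complex `∂t` of the simplex on the vertex set `t`. -/
def bdrySimplex {V : Type*} (t : Finset V) : Set (Finset V) := {s | s ⊂ t}

/-- The join of two simplicial complexes. -/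
def joinC {V : Type*} [DecidableEq V] (A B : Set (Finset V)) : Set (Finset V) :=
  {F | ∃ a ∈ A, ∃ b ∈ B, F = a ∪ b}

/-- The iterated join of a list of simplicial complexes. -/
def multiJoin {V : Type*} [DecidableEq V] : List (Set (Finset V)) → Set (Finset V)
  | [] => {∅}
  | A :: l => joinC A (multiJoin l)

lemma mem_multiJoin_map_range {W : Type*} [DecidableEq W] (g : ℕ → Set (Finset W)) :
    ∀ (n : ℕ) (rest : List (Set (Finset W))) (F : Finset W),
      F ∈ multiJoin ((List.range n).map g ++ rest) ↔
        ∃ h : ℕ → Finset W, (∀ j < n, h j ∈ g j) ∧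
          ∃ b ∈ multiJoin rest, F = (Finset.range n).sup h ∪ b := by
  intro n
  induction n with
  | zero =>
    intro rest F
    simp only [List.range_zero, List.map_nil, List.nil_append]
    constructor
    · intro hF
      exact ⟨fun _ => ∅, fun j hj => absurd hj (Nat.not_lt_zero j), F, hF, by simp⟩
    · rintro ⟨h, -, b, hb, rfl⟩
      simpa using hb
  | succ n ih =>
    intro rest F
    rw [List.range_succ, List.map_append, List.append_assoc]
    simp only [List.map_cons, List.map_nil, List.singleton_append]
    rw [ih (g n :: rest) F]
    constructor
    · rintro ⟨h, hh, b, hb, rfl⟩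
      obtain ⟨a, ha, b', hb', rfl⟩ : ∃ a ∈ g n, ∃ b' ∈ multiJoin rest, b = a ∪ b' := hb
      refine ⟨Function.update h n a, ?_, b', hb', ?_⟩
      · intro j hj
        rcases Nat.lt_succ_iff_lt_or_eq.mp hj with hj' | rfl
        · rw [Function.update_of_ne (by omega)]
          exact hh j hj'
        · simpa using ha
      · rw [Finset.range_add_one, Finset.sup_insert]
        have hs : (Finset.range n).sup (Function.update h n a) = (Finset.range n).sup h :=
          Finset.sup_congr rfl fun j hj =>
            Function.update_of_ne (by simp only [Finset.mem_range] at hj; omega) _ _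
        rw [hs, Function.update_self]
        have e : ∀ a b : Finset W, a ⊔ b = a ∪ b := fun _ _ => rfl
        rw [e]
        ext x
        simp only [Finset.mem_union]
        tauto
    · rintro ⟨h, hh, b, hb, rfl⟩
      refine ⟨h, fun j hj => hh j (by omega), h n ∪ b, ⟨h n, hh n (by omega), b, hb, rfl⟩, ?_⟩
      rw [Finset.range_add_one, Finset.sup_insert]
      have e : ∀ a b : Finset W, a ⊔ b = a ∪ b := fun _ _ => rfl
      rw [e]
      ext x
      simp only [Finset.mem_union]
      tauto
open SRPure in
/-- Let `σ = {u_{τ_0}, …, u_{τ_{r-1}}}` be a face of the barycentric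
subdivision `B(Δ)` given by a chain `τ_0 ⊂ … ⊂ τ_{r-1}` of nonempty faces of `Δ`.  Then
the vertex map `u_f ↦ u_{f \ τ_j}` (where `τ_j` is the largest chain member contained in
`f`) induces an isomorphism of simplicial complexes
`link_{B(Δ)}(σ) ≅ B(link_Δ τ_{r-1}) * B(link_{∂τ_{r-1}} τ_{r-2}) * … * B(link_{∂τ_1} τ_0) * B(∂τ_0)`. -/
theorem link_bary_bijOn_multiJoin {V : Type*} [DecidableEq V]
    (Δ : Set (Finset V)) (hΔ : IsDown Δ)
    (r : ℕ) (hr : 1 ≤ r) (τ : ℕ → Finset V)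
    (hτΔ : ∀ j < r, τ j ∈ Δ ∧ τ j ≠ ∅)
    (hchain : ∀ j, j + 1 < r → τ j ⊂ τ (j + 1)) :
    Set.BijOn
      (fun C : Finset (Finset V) =>
        C.image fun f => f \ ((((Finset.range r).image τ).filter fun t => t ⊆ f).sup id))
      (link (baryC Δ) ((Finset.range r).image τ))
      (multiJoin (baryC (link Δ (τ (r - 1))) ::
        (((List.range (r - 1)).map fun j =>
            baryC (link (bdrySimplex (τ (j + 1))) (τ j))) ++
          [baryC (bdrySimplex (τ 0))]))) := by
  obtain ⟨m, rfl⟩ : ∃ m, r = m + 1 := ⟨r - 1, (Nat.succ_pred_eq_of_pos hr).symm⟩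
  simp only [Nat.add_sub_cancel]
  set σ : Finset (Finset V) := (Finset.range (m + 1)).image τ with hσdef
  set φ : Finset V → Finset V :=
    fun f => f \ ((σ.filter fun t => t ⊆ f).sup id) with hφdef
  -- monotonicity of the chain
  have hsub : ∀ {j k : ℕ}, j ≤ k → k < m + 1 → τ j ⊆ τ k := by
    have key : ∀ d j, j + d < m + 1 → τ j ⊆ τ (j + d) := by
      intro d
      induction d with
      | zero => intro j _; exact subset_rfl
      | succ d ih =>
        intro j h
        exact (ih j (by omega)).trans (hchain (j + d) (by omega)).subset
    intro j k hjk hk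
    have := key (k - j) j (by omega)
    rwa [Nat.add_sub_cancel' hjk] at this
  have hssub : ∀ {j k : ℕ}, j < k → k < m + 1 → τ j ⊂ τ k := by
    intro j k hjk hk
    obtain ⟨d, rfl⟩ : ∃ d, k = d + 1 := ⟨k - 1, by omega⟩
    exact _root_.ssubset_of_subset_of_ssubset (hsub (by omega) (by omega)) (hchain d (by omega))
  have habs : ∀ {x t : Finset V}, x ⊆ t → Disjoint x t → x.Nonempty → False := by
    rintro x t hxt hd ⟨a, ha⟩
    exact Finset.disjoint_left.mp hd ha (hxt ha)
  have habs2 : ∀ {s t : Finset V}, s ⊂ t → t ⊆ s → False := by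
    intro s t hst hts
    exact (Finset.ssubset_def.mp hst).2 hts
  -- computing the map
  have hφ_eq : ∀ (f : Finset V) (j : ℕ), j < m + 1 → τ j ⊆ f →
      (∀ k, k < m + 1 → τ k ⊆ f → τ k ⊆ τ j) → φ f = f \ τ j := by
    intro f j hj hjf hmax
    have hsup : ((σ.filter fun t => t ⊆ f).sup id) = τ j := by
      apply le_antisymm
      · apply Finset.sup_le
        intro x hx
        simp only [hσdef, Finset.mem_filter, Finset.mem_image, Finset.mem_range] at hx
        obtain ⟨⟨k, hk, rfl⟩, hkf⟩ := hx
        exact hmax k hk hkf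
      · apply Finset.le_sup (f := id)
        simp only [hσdef, Finset.mem_filter, Finset.mem_image, Finset.mem_range]
        exact ⟨⟨j, hj, rfl⟩, hjf⟩
    rw [hφdef]
    simp only [hsup]
  have hφ_bot : ∀ f : Finset V, ¬ τ 0 ⊆ f → φ f = f := by
    intro f h0
    have hsup : (σ.filter fun t => t ⊆ f) = ∅ := by
      rw [Finset.filter_eq_empty_iff]
      intro x hx
      simp only [hσdef, Finset.mem_image, Finset.mem_range] at hx
      obtain ⟨k, hk, rfl⟩ := hx
      intro hkf
      exact h0 ((hsub (Nat.zero_le k) hk).trans hkf)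
    rw [hφdef]
    simp [hsup]
  have hφ_top : ∀ f : Finset V, τ m ⊆ f → φ f = f \ τ m := by
    intro f hf
    exact hφ_eq f m (by omega) hf (fun k hk _ => hsub (by omega) (by omega))
  have hφ_mid : ∀ (f : Finset V) (j : ℕ), j < m → τ j ⊆ f → f ⊂ τ (j + 1) → φ f = f \ τ j := by
    intro f j hj hjf hfj
    refine hφ_eq f j (by omega) hjf ?_
    intro k hk hkf
    rcases le_or_gt k j with hkj | hkj
    · exact hsub hkj (by omega)
    · exact absurd ((hsub (by omega : j + 1 ≤ k) hk).trans hkf) (Finset.ssubset_def.mp hfj).2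
    -- validity of members of chains in the link
  have hvalid : ∀ {C : Finset (Finset V)}, C ∈ link (baryC Δ) σ → ∀ f ∈ C,
      f ∈ Δ ∧ f ≠ ∅ ∧ (∀ k, k < m + 1 → f ≠ τ k) ∧ (∀ k, k < m + 1 → f ⊆ τ k ∨ τ k ⊆ f) := by
    rintro C ⟨hdisj, h1, h2⟩ f hf
    have hfΔ := h1 f (Finset.mem_union_left _ hf)
    refine ⟨hfΔ.1, hfΔ.2, ?_, ?_⟩
    · intro k hk heq
      exact Finset.disjoint_left.mp hdisj hf
        (by rw [hσdef]; exact Finset.mem_image.mpr ⟨k, Finset.mem_range.mpr hk, heq.symm⟩)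
    · intro k hk
      exact h2 f (Finset.mem_union_left _ hf) (τ k)
        (Finset.mem_union_right _ (by rw [hσdef]; exact Finset.mem_image.mpr ⟨k, Finset.mem_range.mpr hk, rfl⟩))
  have hchainC : ∀ {C : Finset (Finset V)}, C ∈ link (baryC Δ) σ →
      ∀ f ∈ C, ∀ g ∈ C, f ⊆ g ∨ g ⊆ f := by
    rintro C ⟨-, -, h2⟩ f hf g hg
    exact h2 f (Finset.mem_union_left _ hf) g (Finset.mem_union_left _ hg)
  -- classification of members of chains in the link
  have hclass : ∀ {C : Finset (Finset V)}, C ∈ link (baryC Δ) σ → ∀ f ∈ C,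
      (τ m ⊂ f) ∨ (∃ j, j < m ∧ τ j ⊂ f ∧ f ⊂ τ (j + 1)) ∨ f ⊂ τ 0 := by
    intro C hC f hf
    obtain ⟨hfΔ, hfne, hne, hcomp⟩ := hvalid hC f hf
    by_cases h0 : τ 0 ⊆ f
    · set S : Finset ℕ := (Finset.range (m + 1)).filter (fun k => τ k ⊆ f) with hSdef
      have hS : S.Nonempty := ⟨0, by simp [hSdef, h0]⟩
      set j : ℕ := S.max' hS with hjdef
      have hjS : j ∈ S := S.max'_mem hS
      simp only [hSdef, Finset.mem_filter, Finset.mem_range] at hjS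
      obtain ⟨hj, hjf⟩ := hjS
      have hjmax : ∀ k, k < m + 1 → τ k ⊆ f → k ≤ j := by
        intro k hk hkf
        exact S.le_max' k (by simp [hSdef, hk, hkf])
      have hjss : τ j ⊂ f := Finset.ssubset_iff_subset_ne.mpr ⟨hjf, fun heq => hne j hj heq.symm⟩
      rcases eq_or_lt_of_le (Nat.lt_succ_iff.mp hj) with heq | hlt
      · left; rw [← heq]; exact hjss
      · right; left
        refine ⟨j, hlt, hjss, ?_⟩
        have hns : ¬ τ (j + 1) ⊆ f := fun hc => absurd (hjmax (j + 1) (by omega) hc) (by omega)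
        have := (hcomp (j + 1) (by omega)).resolve_right hns
        exact Finset.ssubset_iff_subset_ne.mpr ⟨this, hne (j + 1) (by omega)⟩
    · right; right
      exact Finset.ssubset_iff_subset_ne.mpr ⟨(hcomp 0 (by omega)).resolve_right h0, hne 0 (by omega)⟩
  -- injectivity of the vertex map on valid elements
  have hφinj : ∀ {C C' : Finset (Finset V)}, C ∈ link (baryC Δ) σ → C' ∈ link (baryC Δ) σ →
      ∀ f ∈ C, ∀ g ∈ C', φ f = φ g → f = g := by
    intro C C' hC hC' f hf g hg heq
    obtain ⟨-, hfne, -, -⟩ := hvalid hC f hf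
    obtain ⟨-, hgne, -, -⟩ := hvalid hC' g hg
    have hrec : ∀ (x : Finset V) (t : Finset V), t ⊆ x → x \ t ∪ t = x :=
      fun x t => Finset.sdiff_union_of_subset
    rcases hclass hC f hf with hft | ⟨j, hj, hfj, hfj'⟩ | hfb <;>
      rcases hclass hC' g hg with hgt | ⟨k, hk, hgk, hgk'⟩ | hgb
    · -- top top
      rw [hφ_top f hft.subset, hφ_top g hgt.subset] at heq
      rw [← hrec f (τ m) hft.subset, ← hrec g (τ m) hgt.subset, heq]
    · -- f top, g mid k
      rw [hφ_top f hft.subset, hφ_mid g k hk hgk.subset hgk'] at heq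
      refine (habs (x := g \ τ k) (t := τ m) ?_ ?_ ?_).elim
      · exact (Finset.sdiff_subset.trans (Finset.ssubset_def.mp hgk').1).trans
          (hsub (by omega) (by omega))
      · rw [← heq]; exact Finset.sdiff_disjoint
      · exact Finset.sdiff_nonempty.mpr (Finset.ssubset_def.mp hgk).2
    · -- f top, g bot
      rw [hφ_top f hft.subset, hφ_bot g (Finset.ssubset_def.mp hgb).2] at heq
      refine (habs (x := g) (t := τ m) ?_ ?_ ?_).elim
      · exact (Finset.ssubset_def.mp hgb).1.trans (hsub (Nat.zero_le m) (by omega))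
      · rw [← heq]; exact Finset.sdiff_disjoint
      · exact Finset.nonempty_iff_ne_empty.mpr hgne
    · -- f mid j, g top
      rw [hφ_top g hgt.subset, hφ_mid f j hj hfj.subset hfj'] at heq
      refine (habs (x := f \ τ j) (t := τ m) ?_ ?_ ?_).elim
      · exact (Finset.sdiff_subset.trans (Finset.ssubset_def.mp hfj').1).trans
          (hsub (by omega) (by omega))
      · rw [heq]; exact Finset.sdiff_disjoint
      · exact Finset.sdiff_nonempty.mpr (Finset.ssubset_def.mp hfj).2
    · -- f mid j, g mid k
      rw [hφ_mid f j hj hfj.subset hfj', hφ_mid g k hk hgk.subset hgk'] at heq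
      rcases lt_trichotomy j k with hjk | rfl | hjk
      · refine (habs (x := f \ τ j) (t := τ k) ?_ ?_ ?_).elim
        · exact (Finset.sdiff_subset.trans (Finset.ssubset_def.mp hfj').1).trans
            (hsub (by omega) (by omega))
        · rw [heq]; exact Finset.sdiff_disjoint
        · exact Finset.sdiff_nonempty.mpr (Finset.ssubset_def.mp hfj).2
      · rw [← hrec f (τ j) hfj.subset, ← hrec g (τ j) hgk.subset, heq]
      · refine (habs (x := g \ τ k) (t := τ j) ?_ ?_ ?_).elim
        · exact (Finset.sdiff_subset.trans (Finset.ssubset_def.mp hgk').1).trans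
            (hsub (by omega) (by omega))
        · rw [← heq]; exact Finset.sdiff_disjoint
        · exact Finset.sdiff_nonempty.mpr (Finset.ssubset_def.mp hgk).2
    · -- f mid j, g bot
      rw [hφ_mid f j hj hfj.subset hfj', hφ_bot g (Finset.ssubset_def.mp hgb).2] at heq
      refine (habs (x := g) (t := τ j) ?_ ?_ ?_).elim
      · exact (Finset.ssubset_def.mp hgb).1.trans (hsub (Nat.zero_le j) (by omega))
      · rw [← heq]; exact Finset.sdiff_disjoint
      · exact Finset.nonempty_iff_ne_empty.mpr hgne
    · -- f bot, g top
      rw [hφ_bot f (Finset.ssubset_def.mp hfb).2, hφ_top g hgt.subset] at heq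
      refine (habs (x := f) (t := τ m) ?_ ?_ ?_).elim
      · exact (Finset.ssubset_def.mp hfb).1.trans (hsub (Nat.zero_le m) (by omega))
      · rw [heq]; exact Finset.sdiff_disjoint
      · exact Finset.nonempty_iff_ne_empty.mpr hfne
    · -- f bot, g mid k
      rw [hφ_bot f (Finset.ssubset_def.mp hfb).2, hφ_mid g k hk hgk.subset hgk'] at heq
      refine (habs (x := f) (t := τ k) ?_ ?_ ?_).elim
      · exact (Finset.ssubset_def.mp hfb).1.trans (hsub (Nat.zero_le k) (by omega))
      · rw [heq]; exact Finset.sdiff_disjoint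
      · exact Finset.nonempty_iff_ne_empty.mpr hfne
    · -- bot bot
      rw [hφ_bot f (Finset.ssubset_def.mp hfb).2, hφ_bot g (Finset.ssubset_def.mp hgb).2] at heq
      exact heq
    -- characterization of the target multi-join
  have hmj1 : ∀ (Z : Set (Finset (Finset V))) (F : Finset (Finset V)),
      F ∈ multiJoin [Z] ↔ F ∈ Z := by
    intro Z F
    constructor
    · rintro ⟨z, hz, e, he, rfl⟩
      obtain rfl : e = ∅ := he
      simpa using hz
    · intro hF
      exact ⟨F, hF, ∅, rfl, by simp⟩
  have htarget : ∀ F : Finset (Finset V),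
      F ∈ multiJoin (baryC (link Δ (τ m)) ::
        (((List.range m).map fun j => baryC (link (bdrySimplex (τ (j + 1))) (τ j))) ++
          [baryC (bdrySimplex (τ 0))])) ↔
      ∃ A ∈ baryC (link Δ (τ m)),
        ∃ h : ℕ → Finset (Finset V),
          (∀ j < m, h j ∈ baryC (link (bdrySimplex (τ (j + 1))) (τ j))) ∧
          ∃ D ∈ baryC (bdrySimplex (τ 0)), F = A ∪ ((Finset.range m).sup h ∪ D) := by
    intro F
    constructor
    · rintro ⟨A, hA, b, hb, rfl⟩
      rw [mem_multiJoin_map_range] at hb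
      obtain ⟨h, hh, d, hd, rfl⟩ := hb
      rw [hmj1] at hd
      exact ⟨A, hA, h, hh, d, hd, rfl⟩
    · rintro ⟨A, hA, h, hh, D, hD, rfl⟩
      refine ⟨A, hA, (Finset.range m).sup h ∪ D, ?_, rfl⟩
      rw [mem_multiJoin_map_range]
      exact ⟨h, hh, D, (hmj1 _ _).mpr hD, rfl⟩
  refine ⟨?_, ?_, ?_⟩
  · -- MapsTo
    intro C hC
    refine (htarget _).mpr
      ⟨(C.filter fun f => τ m ⊂ f).image (· \ τ m), ?_,
       (fun j => (C.filter fun f => τ j ⊂ f ∧ f ⊂ τ (j + 1)).image (· \ τ j)), ?_,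
       C.filter (fun f => f ⊂ τ 0), ?_, ?_⟩
    · refine ⟨?_, ?_⟩
      · intro x hx
        simp only [Finset.mem_image, Finset.mem_filter] at hx
        obtain ⟨f, ⟨hfC, hfss⟩, rfl⟩ := hx
        obtain ⟨hfΔ, hfne, -, -⟩ := hvalid hC f hfC
        refine ⟨⟨Finset.sdiff_disjoint, ?_⟩, ?_⟩
        · rw [Finset.sdiff_union_of_subset hfss.subset]; exact hfΔ
        · exact (Finset.sdiff_nonempty.mpr (Finset.ssubset_def.mp hfss).2).ne_empty
      · intro x hx y hy
        simp only [Finset.mem_image, Finset.mem_filter] at hx hy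
        obtain ⟨f, ⟨hfC, -⟩, rfl⟩ := hx
        obtain ⟨g, ⟨hgC, -⟩, rfl⟩ := hy
        rcases hchainC hC f hfC g hgC with hfg | hgf
        · exact Or.inl (Finset.sdiff_subset_sdiff hfg subset_rfl)
        · exact Or.inr (Finset.sdiff_subset_sdiff hgf subset_rfl)
    · intro j hj
      refine ⟨?_, ?_⟩
      · intro x hx
        simp only [Finset.mem_image, Finset.mem_filter] at hx
        obtain ⟨f, ⟨hfC, hf1, hf2⟩, rfl⟩ := hx
        refine ⟨⟨Finset.sdiff_disjoint, ?_⟩, ?_⟩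
        · show f \ τ j ∪ τ j ⊂ τ (j + 1)
          rw [Finset.sdiff_union_of_subset hf1.subset]; exact hf2
        · exact (Finset.sdiff_nonempty.mpr (Finset.ssubset_def.mp hf1).2).ne_empty
      · intro x hx y hy
        simp only [Finset.mem_image, Finset.mem_filter] at hx hy
        obtain ⟨f, ⟨hfC, -⟩, rfl⟩ := hx
        obtain ⟨g, ⟨hgC, -⟩, rfl⟩ := hy
        rcases hchainC hC f hfC g hgC with hfg | hgf
        · exact Or.inl (Finset.sdiff_subset_sdiff hfg subset_rfl)
        · exact Or.inr (Finset.sdiff_subset_sdiff hgf subset_rfl)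
    · refine ⟨?_, ?_⟩
      · intro x hx
        simp only [Finset.mem_filter] at hx
        exact ⟨hx.2, (hvalid hC x hx.1).2.1⟩
      · intro x hx y hy
        simp only [Finset.mem_filter] at hx hy
        exact hchainC hC x hx.1 y hy.1
    · ext x
      simp only [Finset.mem_image, Finset.mem_union, Finset.mem_sup, Finset.mem_range,
        Finset.mem_filter]
      constructor
      · rintro ⟨f, hfC, rfl⟩
        rcases hclass hC f hfC with hft | ⟨j, hj, hfj, hfj'⟩ | hfb
        · exact Or.inl ⟨f, ⟨hfC, hft⟩, (hφ_top f hft.subset).symm⟩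
        · exact Or.inr (Or.inl ⟨j, hj, f, ⟨hfC, hfj, hfj'⟩, (hφ_mid f j hj hfj.subset hfj').symm⟩)
        · rw [hφ_bot f (Finset.ssubset_def.mp hfb).2]
          exact Or.inr (Or.inr ⟨hfC, hfb⟩)
      · rintro (⟨f, ⟨hfC, hft⟩, rfl⟩ | ⟨j, hj, f, ⟨hfC, hfj, hfj'⟩, rfl⟩ | ⟨hxC, hxb⟩)
        · exact ⟨f, hfC, hφ_top f hft.subset⟩
        · exact ⟨f, hfC, hφ_mid f j hj hfj.subset hfj'⟩
        · exact ⟨x, hxC, hφ_bot x (Finset.ssubset_def.mp hxb).2⟩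
  · -- InjOn
    intro C hC C' hC' heq
    have key : ∀ {D D' : Finset (Finset V)}, D ∈ link (baryC Δ) σ → D' ∈ link (baryC Δ) σ →
        D.image φ = D'.image φ → D ⊆ D' := by
      intro D D' hD hD' he f hf
      have hmem : φ f ∈ D'.image φ := by rw [← he]; exact Finset.mem_image_of_mem φ hf
      obtain ⟨g, hg, hgf⟩ := Finset.mem_image.mp hmem
      rw [← hφinj hD' hD g hg f hf hgf]
      exact hg
    exact Finset.Subset.antisymm (key hC hC' heq) (key hC' hC heq.symm)
  · -- SurjOn
    intro F hF
    obtain ⟨A, hA, h, hh, D, hD, rfl⟩ := (htarget F).mp hF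
    set C₀ : Finset (Finset V) :=
      A.image (· ∪ τ m) ∪ ((Finset.range m).sup fun j => (h j).image (· ∪ τ j)) ∪ D with hC₀def
    have hmemC : ∀ x : Finset V, x ∈ C₀ ↔
        (∃ g ∈ A, g ∪ τ m = x) ∨ (∃ j < m, ∃ g ∈ h j, g ∪ τ j = x) ∨ x ∈ D := by
      intro x
      rw [hC₀def]
      constructor
      · intro hx
        rcases Finset.mem_union.mp hx with hx | hx
        · rcases Finset.mem_union.mp hx with hx | hx
          · obtain ⟨g, hg, he⟩ := Finset.mem_image.mp hx
            exact Or.inl ⟨g, hg, he⟩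
          · obtain ⟨j, hj, hx2⟩ := Finset.mem_sup.mp hx
            obtain ⟨g, hg, he⟩ := Finset.mem_image.mp hx2
            exact Or.inr (Or.inl ⟨j, Finset.mem_range.mp hj, g, hg, he⟩)
        · exact Or.inr (Or.inr hx)
      · rintro (⟨g, hg, rfl⟩ | ⟨j, hj, g, hg, rfl⟩ | hx)
        · exact Finset.mem_union_left _ (Finset.mem_union_left _ (Finset.mem_image_of_mem _ hg))
        · exact Finset.mem_union_left _ (Finset.mem_union_right _
            (Finset.mem_sup.mpr ⟨j, Finset.mem_range.mpr hj, Finset.mem_image_of_mem _ hg⟩))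
        · exact Finset.mem_union_right _ hx
    have hAel : ∀ g ∈ A, Disjoint g (τ m) ∧ g ∪ τ m ∈ Δ ∧ g ≠ ∅ := by
      intro g hg
      obtain ⟨⟨h1, h2⟩, h3⟩ := hA.1 g hg
      exact ⟨h1, h2, h3⟩
    have hhel : ∀ j, j < m → ∀ g ∈ h j, Disjoint g (τ j) ∧ g ∪ τ j ⊂ τ (j + 1) ∧ g ≠ ∅ := by
      intro j hj g hg
      obtain ⟨⟨h1, h2⟩, h3⟩ := (hh j hj).1 g hg
      exact ⟨h1, h2, h3⟩
    have hDel : ∀ g ∈ D, g ⊂ τ 0 ∧ g ≠ ∅ := fun g hg => hD.1 g hg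
    have hstrict : ∀ (g t : Finset V), Disjoint g t → g ≠ ∅ → t ⊂ g ∪ t := by
      intro g t hd hg
      refine Finset.ssubset_def.mpr ⟨Finset.subset_union_right, fun hc => hg ?_⟩
      have hgt : g ⊆ t := Finset.subset_union_left.trans hc
      exact Finset.eq_empty_iff_forall_notMem.mpr fun a ha =>
        Finset.disjoint_left.mp hd ha (hgt ha)
    have hne' : ∀ (g : Finset V) (j : ℕ), j < m + 1 → g ∪ τ j ≠ ∅ := by
      intro g j hj hc
      have hsub0 : τ j ⊆ g ∪ τ j := Finset.subset_union_right
      rw [hc] at hsub0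
      exact (hτΔ j hj).2 (Finset.subset_empty.mp hsub0)
    have hup : ∀ x ∈ C₀,
        (τ m ⊂ x ∧ x ∈ Δ ∧ x ≠ ∅) ∨
        (∃ j, j < m ∧ τ j ⊂ x ∧ x ⊂ τ (j + 1) ∧ x ∈ Δ ∧ x ≠ ∅) ∨
        (x ⊂ τ 0 ∧ x ∈ Δ ∧ x ≠ ∅) := by
      intro x hx
      rcases (hmemC x).mp hx with ⟨g, hg, rfl⟩ | ⟨j, hj, g, hg, rfl⟩ | hxD
      · obtain ⟨h1, h2, h3⟩ := hAel g hg
        exact Or.inl ⟨hstrict g (τ m) h1 h3, h2, hne' g m (by omega)⟩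
      · obtain ⟨h1, h2, h3⟩ := hhel j hj g hg
        exact Or.inr (Or.inl ⟨j, hj, hstrict g (τ j) h1 h3, h2,
          hΔ _ (hτΔ (j + 1) (by omega)).1 _ h2.subset, hne' g j (by omega)⟩)
      · obtain ⟨h1, h2⟩ := hDel x hxD
        exact Or.inr (Or.inr ⟨h1, hΔ _ (hτΔ 0 (by omega)).1 _ h1.subset, h2⟩)
    have hC₀link : C₀ ∈ link (baryC Δ) σ := by
      refine ⟨?_, ?_, ?_⟩
      · rw [Finset.disjoint_left]
        intro x hx hxσ
        rw [hσdef] at hxσ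
        obtain ⟨k, hk, rfl⟩ := Finset.mem_image.mp hxσ
        rw [Finset.mem_range] at hk
        rcases hup _ hx with ⟨h1, -, -⟩ | ⟨j, hj, h1, h2, -, -⟩ | ⟨h1, -, -⟩
        · exact habs2 h1 (hsub (by omega : k ≤ m) (by omega))
        · have hjk : j < k := by
            by_contra hc
            exact habs2 h1 (hsub (by omega : k ≤ j) (by omega))
          have hkj : k ≤ j := by
            by_contra hc
            exact habs2 h2 (hsub (by omega : j + 1 ≤ k) hk)
          omega
        · exact habs2 h1 (hsub (Nat.zero_le k) hk)
      · intro x hx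
        rcases Finset.mem_union.mp hx with hx | hx
        · rcases hup x hx with ⟨-, h2, h3⟩ | ⟨j, -, -, -, h2, h3⟩ | ⟨-, h2, h3⟩ <;> exact ⟨h2, h3⟩
        · rw [hσdef] at hx
          obtain ⟨k, hk, rfl⟩ := Finset.mem_image.mp hx
          exact hτΔ k (Finset.mem_range.mp hk)
      · -- the chain property
        have hsrc : ∀ x ∈ C₀ ∪ σ,
            (∃ g ∈ A, g ∪ τ m = x) ∨ (∃ j < m, ∃ g ∈ h j, g ∪ τ j = x) ∨ x ∈ D ∨
            (∃ k < m + 1, τ k = x) := by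
          intro x hx
          rcases Finset.mem_union.mp hx with hx | hx
          · rcases (hmemC x).mp hx with h1 | h1 | h1
            exacts [Or.inl h1, Or.inr (Or.inl h1), Or.inr (Or.inr (Or.inl h1))]
          · right; right; right
            rw [hσdef] at hx
            obtain ⟨k, hk, hkx⟩ := Finset.mem_image.mp hx
            exact ⟨k, Finset.mem_range.mp hk, hkx⟩
        intro x hx y hy
        rcases hsrc x hx with ⟨g, hg, rfl⟩ | ⟨j, hj, g, hg, rfl⟩ | hxD | ⟨k, hk, rfl⟩ <;>
          rcases hsrc y hy with ⟨g', hg', rfl⟩ | ⟨j', hj', g', hg', rfl⟩ | hyD | ⟨k', hk', rfl⟩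
        · rcases hA.2 g hg g' hg' with hgg | hgg
          · exact Or.inl (Finset.union_subset_union hgg subset_rfl)
          · exact Or.inr (Finset.union_subset_union hgg subset_rfl)
        · exact Or.inr ((hhel j' hj' g' hg').2.1.subset.trans
            ((hsub (by omega : j' + 1 ≤ m) (by omega)).trans Finset.subset_union_right))
        · exact Or.inr ((hDel _ hyD).1.subset.trans
            ((hsub (Nat.zero_le m) (by omega)).trans Finset.subset_union_right))
        · exact Or.inr ((hsub (by omega : k' ≤ m) (by omega)).trans Finset.subset_union_right)
        · exact Or.inl ((hhel j hj g hg).2.1.subset.trans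
            ((hsub (by omega : j + 1 ≤ m) (by omega)).trans Finset.subset_union_right))
        · rcases lt_trichotomy j j' with hlt | heqj | hlt
          · exact Or.inl ((hhel j hj g hg).2.1.subset.trans
              ((hsub (by omega : j + 1 ≤ j') (by omega)).trans Finset.subset_union_right))
          · subst heqj
            rcases (hh j hj).2 g hg g' hg' with hgg | hgg
            · exact Or.inl (Finset.union_subset_union hgg subset_rfl)
            · exact Or.inr (Finset.union_subset_union hgg subset_rfl)
          · exact Or.inr ((hhel j' hj' g' hg').2.1.subset.trans
              ((hsub (by omega : j' + 1 ≤ j) (by omega)).trans Finset.subset_union_right))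
        · exact Or.inr ((hDel _ hyD).1.subset.trans
            ((hsub (Nat.zero_le j) (by omega)).trans Finset.subset_union_right))
        · rcases le_or_gt k' j with hkj | hkj
          · exact Or.inr ((hsub hkj (by omega)).trans Finset.subset_union_right)
          · exact Or.inl ((hhel j hj g hg).2.1.subset.trans (hsub (by omega : j + 1 ≤ k') hk'))
        · exact Or.inl ((hDel _ hxD).1.subset.trans
            ((hsub (Nat.zero_le m) (by omega)).trans Finset.subset_union_right))
        · exact Or.inl ((hDel _ hxD).1.subset.trans
            ((hsub (Nat.zero_le j') (by omega)).trans Finset.subset_union_right))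
        · exact hD.2 x hxD y hyD
        · exact Or.inl ((hDel _ hxD).1.subset.trans (hsub (Nat.zero_le k') hk'))
        · exact Or.inl ((hsub (by omega : k ≤ m) (by omega)).trans Finset.subset_union_right)
        · rcases le_or_gt k j' with hkj | hkj
          · exact Or.inl ((hsub hkj (by omega)).trans Finset.subset_union_right)
          · exact Or.inr ((hhel j' hj' g' hg').2.1.subset.trans (hsub (by omega : j' + 1 ≤ k) hk))
        · exact Or.inr ((hDel _ hyD).1.subset.trans (hsub (Nat.zero_le k) hk))
        · rcases le_total k k' with hkk | hkk
          · exact Or.inl (hsub hkk hk')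
          · exact Or.inr (hsub hkk hk)
    have hφA : ∀ g ∈ A, φ (g ∪ τ m) = g := by
      intro g hg
      obtain ⟨h1, -, -⟩ := hAel g hg
      rw [hφ_top _ Finset.subset_union_right, Finset.union_sdiff_cancel_right h1]
    have hφh' : ∀ j, j < m → ∀ g ∈ h j, φ (g ∪ τ j) = g := by
      intro j hj g hg
      obtain ⟨h1, h2, -⟩ := hhel j hj g hg
      rw [hφ_mid _ j hj Finset.subset_union_right h2, Finset.union_sdiff_cancel_right h1]
    have hφD : ∀ g ∈ D, φ g = g := fun g hg => hφ_bot g (Finset.ssubset_def.mp (hDel g hg).1).2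
    have himg : C₀.image φ = A ∪ ((Finset.range m).sup h ∪ D) := by
      ext x
      simp only [Finset.mem_image, Finset.mem_union, Finset.mem_sup, Finset.mem_range]
      constructor
      · rintro ⟨f, hf, rfl⟩
        rcases (hmemC f).mp hf with ⟨g, hg, rfl⟩ | ⟨j, hj, g, hg, rfl⟩ | hfD
        · rw [hφA g hg]; exact Or.inl hg
        · rw [hφh' j hj g hg]; exact Or.inr (Or.inl ⟨j, hj, hg⟩)
        · rw [hφD f hfD]; exact Or.inr (Or.inr hfD)
      · rintro (hg | ⟨j, hj, hg⟩ | hxD)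
        · exact ⟨x ∪ τ m, (hmemC _).mpr (Or.inl ⟨x, hg, rfl⟩), hφA x hg⟩
        · exact ⟨x ∪ τ j, (hmemC _).mpr (Or.inr (Or.inl ⟨j, hj, x, hg, rfl⟩)), hφh' j hj x hg⟩
        · exact ⟨x, (hmemC _).mpr (Or.inr (Or.inr hxD)), hφD x hxD⟩
    exact ⟨C₀, hC₀link, himg⟩
end
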